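/- arXiv:1911.04463 — 11 statements merged into one kernel-verified Lean document; each statement's English description precedes it below -/
import Mathlib

section
/- Let v_1,...,v_n ∈ ℝ^r, c_1,...,c_n ∈ ℝ, with 0 in the interior of convexHull {v_i}. Define Trop(W)(d) = min_i (c_i + ⟨v_i, d⟩) and let τ = min { c : (c, 0) ∈ convexHull {(c_i, v_i)} }. Then for d ∈ ℝ^r, Trop(W)(d) = τ if and only if (τ, 0) lies in the face of convexHull {(c_i,v_i)} on which the linear functional (c,v) ↦ c + ⟨v, d⟩ attains its minimum over the polytope. -/
/-- Lemma 4.7 (l:tauattainment): `Trop(W)(d) = τ` iff `(τ,0)` lies in the lowest face of the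
augmented Newton polytope with respect to `(1,d)`. -/
theorem stmt_1 (r n : ℕ) (hn : 0 < n) (v : Fin n → (Fin r → ℝ)) (c : Fin n → ℝ)
    (h0 : (0 : Fin r → ℝ) ∈ interior (convexHull ℝ (Set.range v)))
    (τ : ℝ)
    (hτ : IsLeast {x : ℝ | ((x, (0 : Fin r → ℝ)) : ℝ × (Fin r → ℝ)) ∈
        convexHull ℝ (Set.range (fun i => ((c i, v i) : ℝ × (Fin r → ℝ))))} τ)
    (d : Fin r → ℝ) :
    Finset.univ.inf' ⟨⟨0, hn⟩, Finset.mem_univ _⟩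
        (fun i => c i + ∑ j, v i j * d j) = τ ↔
      ((τ, (0 : Fin r → ℝ)) : ℝ × (Fin r → ℝ)) ∈
        {w ∈ convexHull ℝ (Set.range (fun i => ((c i, v i) : ℝ × (Fin r → ℝ)))) |
          ∀ u ∈ convexHull ℝ (Set.range (fun i => ((c i, v i) : ℝ × (Fin r → ℝ)))),
            w.1 + ∑ j, w.2 j * d j ≤ u.1 + ∑ j, u.2 j * d j} := by
  set L : ℝ × (Fin r → ℝ) → ℝ := fun u => u.1 + ∑ j, u.2 j * d j with hL
  have hlin : IsLinearMap ℝ L := by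
    constructor
    · intro x y
      simp only [hL, Prod.fst_add, Prod.snd_add, Pi.add_apply, add_mul,
        Finset.sum_add_distrib]
      ring
    · intro a x
      simp [hL, Finset.mul_sum, mul_assoc, mul_add]
  set S := convexHull ℝ (Set.range fun i => ((c i, v i) : ℝ × (Fin r → ℝ))) with hS
  set m := Finset.univ.inf' ⟨⟨0, hn⟩, Finset.mem_univ _⟩
      (fun i => c i + ∑ j, v i j * d j) with hm
  have key : ∀ u ∈ S, m ≤ L u := by
    intro u hu
    have hconv : Convex ℝ {u : ℝ × (Fin r → ℝ) | m ≤ L u} := convex_halfSpace_ge hlin m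
    refine convexHull_min ?_ hconv hu
    rintro _ ⟨i, rfl⟩
    show m ≤ L (c i, v i)
    exact Finset.inf'_le _ (Finset.mem_univ i)
  have hτS : ((τ, 0) : ℝ × (Fin r → ℝ)) ∈ S := hτ.1
  have hLτ : L (τ, 0) = τ := by simp [hL]
  have hmτ : m ≤ τ := hLτ ▸ key _ hτS
  constructor
  · intro h
    refine ⟨hτS, fun u hu => ?_⟩
    have := key u hu
    rw [h] at this
    simpa [hL] using this
  · rintro ⟨-, hmin⟩
    refine le_antisymm hmτ ?_
    refine Finset.le_inf' _ _ fun i _ => ?_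
    have := hmin (c i, v i) (subset_convexHull ℝ _ ⟨i, rfl⟩)
    simpa using this
end

section
/- Let Δ ⊂ ℝ × ℝ^r be the convex hull of finitely many points (c_i, v_i), and suppose 0 lies in the interior of convexHull {v_i} ⊂ ℝ^r. Then for every face F of Δ, the intersection of F with the line ℝ × {0} contains at most one point. -/
/-- Remark 4.6 (r:transversalF): if `0` is interior to the Newton polytope, every proper face of
the augmented Newton polytope meets the fiber `ℝ × {0}` in at most one point. -/
theorem stmt_2 (r n : ℕ) (v : Fin n → (Fin r → ℝ)) (c : Fin n → ℝ)
    (h0 : (0 : Fin r → ℝ) ∈ interior (convexHull ℝ (Set.range v)))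
    (α : (ℝ × (Fin r → ℝ)) →ₗ[ℝ] ℝ)
    (F : Set (ℝ × (Fin r → ℝ)))
    (hF : F = {w ∈ convexHull ℝ (Set.range (fun i => ((c i, v i) : ℝ × (Fin r → ℝ)))) |
      ∀ u ∈ convexHull ℝ (Set.range (fun i => ((c i, v i) : ℝ × (Fin r → ℝ)))), α w ≤ α u})
    (hproper : F ≠ convexHull ℝ (Set.range (fun i => ((c i, v i) : ℝ × (Fin r → ℝ))))) :
    Set.Subsingleton {w ∈ F | w.2 = 0} := by
  subst hF
  set Δ := convexHull ℝ (Set.range (fun i => ((c i, v i) : ℝ × (Fin r → ℝ)))) with hΔ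
  intro w hw w' hw'
  by_contra hne
  obtain ⟨⟨hwΔ, hwmin⟩, hw2⟩ := hw
  obtain ⟨⟨hw'Δ, hw'min⟩, hw'2⟩ := hw'
  set a := α (1, 0) with ha_def
  have hval : ∀ t : ℝ, α (t, 0) = t * a := by
    intro t
    have : ((t, 0) : ℝ × (Fin r → ℝ)) = t • ((1 : ℝ), (0 : Fin r → ℝ)) := by
      simp [Prod.smul_def]
    rw [this, map_smul, smul_eq_mul]
  have hwr : w = (w.1, 0) := by rw [← hw2]
  have hw'r : w' = (w'.1, 0) := by rw [← hw'2]
  have heq : α w = α w' := le_antisymm (hwmin w' hw'Δ) (hw'min w hwΔ)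
  have h1ne : w.1 ≠ w'.1 := by
    intro h
    apply hne
    rw [hwr, hw'r, h]
  have ha : a = 0 := by
    have : (w.1 - w'.1) * a = 0 := by
      have h1 : w.1 * a = w'.1 * a := by
        rw [← hval, ← hval, ← hwr, ← hw'r]; exact heq
      ring_nf
      linarith [h1]
    rcases mul_eq_zero.mp this with h | h
    · exact absurd (sub_eq_zero.mp h) h1ne
    · exact h
  have hmin0 : α w = 0 := by rw [hwr, hval, ha, mul_zero]
  set β : (Fin r → ℝ) →ₗ[ℝ] ℝ := α.comp (LinearMap.inr ℝ ℝ (Fin r → ℝ)) with hβ_def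
  have hdec : ∀ p : ℝ × (Fin r → ℝ), α p = p.1 * a + β p.2 := by
    intro p
    have hp : p = ((p.1, 0) : ℝ × (Fin r → ℝ)) + (0, p.2) := by
      simp
    calc α p = α ((p.1, 0) + ((0 : ℝ), p.2)) := by rw [← hp]
      _ = α (p.1, 0) + α (0, p.2) := map_add _ _ _
      _ = p.1 * a + β p.2 := by rw [hval]; rfl
  have hβnn : ∀ x ∈ convexHull ℝ (Set.range v), 0 ≤ β x := by
    apply convexHull_min _ (convex_halfSpace_ge β.isLinear 0)
    rintro x ⟨i, rfl⟩
    have hi : ((c i, v i) : ℝ × (Fin r → ℝ)) ∈ Δ :=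
      subset_convexHull ℝ _ ⟨i, rfl⟩
    have := hwmin (c i, v i) hi
    rw [hmin0] at this
    have hdi := hdec (c i, v i)
    simp only [ha, mul_zero, zero_add] at hdi
    simpa [hdi] using this
  have hβ0 : ∀ x, β x = 0 := by
    obtain ⟨ε, hε, hball⟩ := Metric.mem_nhds_iff.mp (mem_interior_iff_mem_nhds.mp h0)
    intro x
    set δ : ℝ := ε / (2 * (‖x‖ + 1)) with hδ_def
    have hxnn : (0:ℝ) ≤ ‖x‖ := norm_nonneg x
    have hδpos : 0 < δ := by positivity
    have hmem : ∀ y : Fin r → ℝ, ‖y‖ < ε → 0 ≤ β y := fun y hy =>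
      hβnn y (hball (by simpa [Metric.mem_ball, dist_zero_right] using hy))
    have hnorm : ‖δ • x‖ < ε := by
      rw [norm_smul, Real.norm_eq_abs, abs_of_pos hδpos]
      rw [hδ_def, div_mul_eq_mul_div, div_lt_iff₀ (by positivity)]
      nlinarith
    have h1 : 0 ≤ β (δ • x) := hmem _ hnorm
    have h2 : 0 ≤ β (-(δ • x)) := hmem _ (by rwa [norm_neg])
    rw [map_neg, neg_nonneg] at h2
    have : β (δ • x) = 0 := le_antisymm h2 h1
    rw [map_smul, smul_eq_mul] at this
    rcases mul_eq_zero.mp this with h | h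
    · exact absurd h (ne_of_gt hδpos)
    · exact h
  have hα0 : ∀ p : ℝ × (Fin r → ℝ), α p = 0 := by
    intro p
    rw [hdec, ha, hβ0, mul_zero, add_zero]
  apply hproper
  ext u
  simp [hα0]
end

section
/- Let f : ℝ^m → ℝ be given by f(ρ) = Σ_{i=1}^k c_i · exp(⟨ν_i, ρ⟩), where c_i > 0 and ν_i ∈ ℝ^m. If the convex hull of {ν_1,...,ν_k} is full-dimensional and contains 0 in its interior, then f has a unique critical point, which is a global minimum. -/
open Real Filter

set_option maxHeartbeats 1000000

/-- Galkin's lemma: a positive combination of exponentials whose exponent polytope has `0` in its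
interior has a unique critical point, which is a global minimum. -/
theorem stmt_3 (m k : ℕ) (c : Fin k → ℝ) (hc : ∀ i, 0 < c i) (ν : Fin k → (Fin m → ℝ))
    (h0 : (0 : Fin m → ℝ) ∈ interior (convexHull ℝ (Set.range ν))) :
    ∃ ρ : Fin m → ℝ,
      fderiv ℝ (fun x : Fin m → ℝ => ∑ i, c i * Real.exp (∑ j, ν i j * x j)) ρ = 0 ∧
      (∀ σ : Fin m → ℝ,
        (∑ i, c i * Real.exp (∑ j, ν i j * ρ j)) ≤ ∑ i, c i * Real.exp (∑ j, ν i j * σ j)) ∧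
      (∀ ρ' : Fin m → ℝ,
        fderiv ℝ (fun x : Fin m → ℝ => ∑ i, c i * Real.exp (∑ j, ν i j * x j)) ρ' = 0 →
          ρ' = ρ) := by
  classical
  set f : (Fin m → ℝ) → ℝ := fun x => ∑ i, c i * Real.exp (∑ j, ν i j * x j) with hfdef
  have hkne : Nonempty (Fin k) := by
    by_contra h
    rw [not_nonempty_iff] at h
    rw [Set.range_eq_empty, convexHull_empty, interior_empty] at h0
    exact h0
  obtain ⟨ε, hε, hball⟩ : ∃ ε > 0, Metric.ball (0 : Fin m → ℝ) ε ⊆ convexHull ℝ (Set.range ν) :=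
    Metric.mem_nhds_iff.1 (mem_interior_iff_mem_nhds.1 h0)
  -- the linear forms
  set L : Fin k → ((Fin m → ℝ) →L[ℝ] ℝ) :=
    fun i => ∑ j, ν i j • (ContinuousLinearMap.proj j : (Fin m → ℝ) →L[ℝ] ℝ) with hLdef
  have hL : ∀ i x, L i x = ∑ j, ν i j * x j := by
    intro i x
    simp [hLdef, ContinuousLinearMap.sum_apply]
  have hfL : f = fun x => ∑ i, c i * Real.exp (L i x) := by
    funext x; simp [hfdef, hL]
  -- derivative
  set F' : (Fin m → ℝ) → ((Fin m → ℝ) →L[ℝ] ℝ) :=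
    fun x => ∑ i, (c i * Real.exp (L i x)) • L i with hF'def
  have hderiv : ∀ x, HasFDerivAt f (F' x) x := by
    intro x
    rw [hfL]
    apply HasFDerivAt.fun_sum
    intro i _
    have h1 : HasFDerivAt (fun y => Real.exp (L i y)) (Real.exp (L i x) • L i) x :=
      ((L i).hasFDerivAt).exp
    have h2 := h1.const_mul (c i)
    rw [← smul_smul]
    exact h2
  -- the key geometric estimate
  have key : ∀ x : Fin m → ℝ, ∃ i, ε / 2 * ‖x‖ ≤ L i x := by
    intro x
    by_cases hx : x = 0
    · exact ⟨Classical.arbitrary _, by simp [hx]⟩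
    · have hxn : 0 < ‖x‖ := norm_pos_iff.2 hx
      obtain ⟨i₀, -, hi₀⟩ := Finset.exists_max_image Finset.univ (fun i => L i x)
        ⟨Classical.arbitrary _, Finset.mem_univ _⟩
      refine ⟨i₀, ?_⟩
      set u : Fin m → ℝ := (ε / (2 * ‖x‖)) • x with hu
      have hunorm : ‖u‖ = ε / 2 := by
        rw [hu, norm_smul, Real.norm_eq_abs, abs_of_pos (by positivity)]
        field_simp
      have humem : u ∈ convexHull ℝ (Set.range ν) := hball (by
        rw [Metric.mem_ball, dist_zero_right, hunorm]; linarith)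
      set M : (Fin m → ℝ) →L[ℝ] ℝ :=
        ∑ j, x j • (ContinuousLinearMap.proj j : (Fin m → ℝ) →L[ℝ] ℝ) with hMdef
      have hM : ∀ y, M y = ∑ j, x j * y j := by
        intro y; simp [hMdef, ContinuousLinearMap.sum_apply]
      have hhalf : convexHull ℝ (Set.range ν) ⊆ {y | M y ≤ L i₀ x} := by
        apply convexHull_min
        · rintro - ⟨i, rfl⟩
          have he : M (ν i) = L i x := by
            rw [hM, hL]; exact Finset.sum_congr rfl fun j _ => mul_comm _ _
          simpa [Set.mem_setOf_eq, he] using hi₀ i (Finset.mem_univ i)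
        · exact convex_halfSpace_le M.toLinearMap.isLinear _
      have hMu : M u ≤ L i₀ x := hhalf humem
      have hsum : ‖x‖ ^ 2 ≤ ∑ j, x j ^ 2 := by
        have h1 : ‖x‖ ≤ Real.sqrt (∑ j, x j ^ 2) := by
          rw [pi_norm_le_iff_of_nonneg (Real.sqrt_nonneg _)]
          intro j
          rw [Real.norm_eq_abs, ← Real.sqrt_sq_eq_abs]
          exact Real.sqrt_le_sqrt
            (Finset.single_le_sum (fun j _ => sq_nonneg (x j)) (Finset.mem_univ j))
        calc ‖x‖ ^ 2 ≤ Real.sqrt (∑ j, x j ^ 2) ^ 2 :=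
              pow_le_pow_left₀ (norm_nonneg x) h1 2
          _ = ∑ j, x j ^ 2 := Real.sq_sqrt (by positivity)
      have hMueq : M u = ε / (2 * ‖x‖) * ∑ j, x j ^ 2 := by
        rw [hM, Finset.mul_sum]
        refine Finset.sum_congr rfl fun j _ => ?_
        simp only [hu, Pi.smul_apply, smul_eq_mul]
        ring
      have hMu' : ε / 2 * ‖x‖ ≤ M u := by
        rw [hMueq]
        have heq : ε / 2 * ‖x‖ = ε / (2 * ‖x‖) * ‖x‖ ^ 2 := by
          field_simp
        rw [heq]
        exact mul_le_mul_of_nonneg_left hsum (by positivity)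
      linarith
  -- coercivity and existence of a minimum
  have hcont : Continuous f := by
    have : Differentiable ℝ f := fun x => (hderiv x).differentiableAt
    exact this.continuous
  set cmin : ℝ := Finset.univ.inf' Finset.univ_nonempty c with hcmindef
  have hcmin : 0 < cmin := by
    rw [hcmindef, Finset.lt_inf'_iff]
    exact fun i _ => hc i
  have hlow : ∀ x, cmin * Real.exp (ε / 2 * ‖x‖) ≤ f x := by
    intro x
    obtain ⟨i, hi⟩ := key x
    have h1 : cmin * Real.exp (ε / 2 * ‖x‖) ≤ c i * Real.exp (L i x) :=
      mul_le_mul (Finset.inf'_le c (Finset.mem_univ i)) (Real.exp_le_exp.2 hi)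
        (Real.exp_pos _).le (hc i).le
    refine h1.trans ?_
    rw [hfL]
    exact Finset.single_le_sum (f := fun i => c i * Real.exp (L i x))
      (fun i _ => (mul_pos (hc i) (Real.exp_pos _)).le) (Finset.mem_univ i)
  obtain ⟨ρ, hρ⟩ : ∃ ρ, ∀ y, f ρ ≤ f y := by
    apply hcont.exists_forall_le
    refine tendsto_atTop_mono hlow ?_
    have h2 : Tendsto (fun t : ℝ => cmin * Real.exp (ε / 2 * t)) atTop atTop := by
      apply Tendsto.const_mul_atTop hcmin
      exact Real.tendsto_exp_atTop.comp (tendsto_id.const_mul_atTop (half_pos hε))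
    exact h2.comp tendsto_norm_cocompact_atTop
  have hfderivρ : fderiv ℝ f ρ = 0 := by
    have hlm : IsLocalMin f ρ := Filter.Eventually.of_forall fun y => hρ y
    exact hlm.fderiv_eq_zero
  have hFρ : F' ρ = 0 := by rw [← (hderiv ρ).fderiv]; exact hfderivρ
  refine ⟨ρ, hfderivρ, fun σ => hρ σ, ?_⟩
  -- uniqueness
  intro ρ' hρ'
  have hFρ' : F' ρ' = 0 := by rw [← (hderiv ρ').fderiv]; exact hρ'
  set d : Fin m → ℝ := ρ' - ρ with hd
  set B : Fin k → ℝ := fun i => L i d with hB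
  set q : ℝ → ℝ := fun t => ∑ i, (c i * B i) * Real.exp (L i ρ + t * B i) with hqdef
  have hq' : ∀ t, HasDerivAt q (∑ i, (c i * B i * B i) * Real.exp (L i ρ + t * B i)) t := by
    intro t
    apply HasDerivAt.fun_sum
    intro i _
    have h1 : HasDerivAt (fun t : ℝ => L i ρ + t * B i) (B i) t := by
      simpa using (hasDerivAt_mul_const (B i)).const_add (L i ρ)
    have h2 := (h1.exp).const_mul (c i * B i)
    convert h2 using 1
    exacts [rfl, by ring]
  have happF : ∀ x v, F' x v = ∑ i, (c i * Real.exp (L i x)) * L i v := by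
    intro x v
    simp [hF'def, ContinuousLinearMap.sum_apply]
  have hq0 : q 0 = 0 := by
    have h := congrArg (fun T : (Fin m → ℝ) →L[ℝ] ℝ => T d) hFρ
    simp only [ContinuousLinearMap.zero_apply] at h
    rw [happF] at h
    simp only [hqdef]
    rw [show ∑ i, (c i * B i) * Real.exp (L i ρ + 0 * B i)
        = ∑ i, (c i * Real.exp (L i ρ)) * L i d from
      Finset.sum_congr rfl fun i _ => by simp [hB]; ring]
    exact h
  have hq1 : q 1 = 0 := by
    have h := congrArg (fun T : (Fin m → ℝ) →L[ℝ] ℝ => T d) hFρ'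
    simp only [ContinuousLinearMap.zero_apply] at h
    rw [happF] at h
    simp only [hqdef]
    rw [show ∑ i, (c i * B i) * Real.exp (L i ρ + 1 * B i)
        = ∑ i, (c i * Real.exp (L i ρ')) * L i d from
      Finset.sum_congr rfl fun i _ => by
        have : L i ρ + 1 * B i = L i ρ' := by
          simp [hB, hd, map_sub]
        rw [this, hB]; ring]
    exact h
  have hBzero : ∀ i, B i = 0 := by
    by_contra h
    push_neg at h
    obtain ⟨i, hi⟩ := h
    have hmono : StrictMono q := by
      apply strictMono_of_deriv_pos
      intro t
      rw [(hq' t).deriv]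
      apply Finset.sum_pos'
      · intro j _
        have h1 := mul_nonneg (hc j).le (mul_self_nonneg (B j))
        have h2 := (Real.exp_pos (L j ρ + t * B j)).le
        nlinarith
      · refine ⟨i, Finset.mem_univ i, ?_⟩
        have h1 := mul_pos (hc i) (mul_self_pos.2 hi)
        have h2 := Real.exp_pos (L i ρ + t * B i)
        nlinarith
    have := hmono (show (0:ℝ) < 1 by norm_num)
    rw [hq0, hq1] at this
    exact lt_irrefl 0 this
  obtain ⟨i, hi⟩ := key d
  have hd0 : ‖d‖ ≤ 0 := by
    have hB0 := hBzero i
    rw [hB] at hB0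
    nlinarith [half_pos hε, norm_nonneg d]
  have : d = 0 := norm_le_zero_iff.1 hd0
  rw [hd] at this
  exact sub_eq_zero.1 this
end

section
/- Let W(x) = Σ_{i=1}^n γ_i x^{v_i} be a Laurent polynomial on (ℝ_{>0})^r with coefficients γ_i > 0 and exponents v_i ∈ ℤ^r. If the convex hull of {v_i} has full dimension r and W has a critical point p ∈ (ℝ_{>0})^r, then 0 lies in the interior of convexHull {v_i}. -/
/-- Lemma 7.3 (l:contra1) over ℝ: a positive Laurent polynomial with full-dimensional Newton
polytope that has a positive critical point must have `0` in the interior of its Newton polytope. -/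
theorem stmt_5 (r n : ℕ) (γ : Fin n → ℝ) (hγ : ∀ i, 0 < γ i) (v : Fin n → (Fin r → ℤ))
    (hfull : affineSpan ℝ (Set.range (fun i => fun j => (v i j : ℝ))) = ⊤)
    (p : Fin r → ℝ) (hp : ∀ j, 0 < p j)
    (hcrit : ∀ u : Fin r → ℝ,
      ∑ i, γ i * (∏ j, p j ^ (v i j)) * (∑ j, (v i j : ℝ) * u j) = 0) :
    (0 : Fin r → ℝ) ∈ interior (convexHull ℝ (Set.range (fun i => fun j => (v i j : ℝ)))) := by
  set V : Fin n → (Fin r → ℝ) := fun i => fun j => (v i j : ℝ) with hV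
  set C : Set (Fin r → ℝ) := convexHull ℝ (Set.range V) with hC
  have hconv : Convex ℝ C := convex_convexHull ℝ _
  have hspanC : affineSpan ℝ C = ⊤ := by
    rw [hC, affineSpan_convexHull]; exact hfull
  have hint : (interior C).Nonempty :=
    hconv.interior_nonempty_iff_affineSpan_eq_top.mpr hspanC
  by_contra h0
  obtain ⟨f, hf⟩ := geometric_hahn_banach_open_point hconv.interior isOpen_interior h0
  simp only [map_zero] at hf
  obtain ⟨x0, hx0⟩ := hint
  -- f ≤ 0 on C
  have hCle : ∀ x ∈ C, f x ≤ 0 := by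
    intro x hx
    have hmem : ∀ t : ℝ, t ∈ Set.Ioo (0:ℝ) 1 → t • x0 + (1-t) • x ∈ interior C := by
      intro t ht
      exact hconv.combo_interior_closure_mem_interior hx0 (subset_closure hx) ht.1
        (by linarith [ht.2]) (by ring)
    have hcont : Continuous fun t : ℝ => f (t • x0 + (1-t) • x) := by fun_prop
    have htend : Filter.Tendsto (fun t : ℝ => f (t • x0 + (1-t) • x))
        (nhdsWithin 0 (Set.Ioo 0 1)) (nhds (f x)) := by
      have h00 : f ((0:ℝ) • x0 + (1-(0:ℝ)) • x) = f x := by simp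
      simpa [h00] using (hcont.tendsto 0).mono_left nhdsWithin_le_nhds
    have hne : (nhdsWithin (0:ℝ) (Set.Ioo 0 1)).NeBot := by
      apply mem_closure_iff_nhdsWithin_neBot.mp
      rw [closure_Ioo one_ne_zero.symm]
      exact ⟨le_refl 0, zero_le_one⟩
    exact le_of_tendsto htend (Filter.eventually_of_mem self_mem_nhdsWithin
      fun t ht => (hf _ (hmem t ht)).le)
  have hVle : ∀ i, f (V i) ≤ 0 := fun i => hCle (V i) (subset_convexHull ℝ _ ⟨i, rfl⟩)
  -- f as inner product with u
  set u : Fin r → ℝ := fun j => f (fun k => if j = k then 1 else 0) with hu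
  have hfu : ∀ x : Fin r → ℝ, f x = ∑ j, x j * u j := by
    intro x
    have := (f : (Fin r → ℝ) →ₗ[ℝ] ℝ).pi_apply_eq_sum_univ x
    simpa [smul_eq_mul] using this
  have key := hcrit u
  have hterm : ∀ i ∈ Finset.univ, γ i * (∏ j, p j ^ (v i j)) * (∑ j, (v i j : ℝ) * u j) ≤ 0 := by
    intro i _
    have hc : 0 < γ i * (∏ j, p j ^ (v i j)) := by
      apply mul_pos (hγ i)
      exact Finset.prod_pos fun j _ => zpow_pos (hp j) _
    have : (∑ j, (v i j : ℝ) * u j) = f (V i) := (hfu (V i)).symm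
    rw [this]
    exact mul_nonpos_of_nonneg_of_nonpos hc.le (hVle i)
  have hzero : ∀ i ∈ Finset.univ,
      γ i * (∏ j, p j ^ (v i j)) * (∑ j, (v i j : ℝ) * u j) = 0 :=
    (Finset.sum_eq_zero_iff_of_nonpos hterm).mp key
  have hfV0 : ∀ i, f (V i) = 0 := by
    intro i
    have hc : 0 < γ i * (∏ j, p j ^ (v i j)) := by
      apply mul_pos (hγ i)
      exact Finset.prod_pos fun j _ => zpow_pos (hp j) _
    have := hzero i (Finset.mem_univ i)
    have h2 : (∑ j, (v i j : ℝ) * u j) = 0 := by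
      rcases mul_eq_zero.mp this with h | h
      · exact absurd h hc.ne'
      · exact h
    rw [hfu]; exact h2
  -- range V ⊆ ker f, so affine span ⊆ ker f, contradiction with span = ⊤
  have hker : affineSpan ℝ (Set.range V) ≤
      (LinearMap.ker (f : (Fin r → ℝ) →ₗ[ℝ] ℝ)).toAffineSubspace := by
    apply affineSpan_le.mpr
    rintro x ⟨i, rfl⟩
    exact hfV0 i
  rw [hfull] at hker
  have hx0' : f x0 = 0 := hker (AffineSubspace.mem_top ℝ _ x0)
  exact absurd (hf x0 hx0) (by rw [hx0']; exact lt_irrefl 0)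
end

section
/- Let W(x) = Σ_{i=1}^n γ_i x^{v_i} with γ_i > 0 and v_i ∈ ℤ^r. Then W has a unique critical point in (ℝ_{>0})^r if and only if the convex hull of {v_1,...,v_n} is full-dimensional in ℝ^r and contains 0 in its interior. -/
set_option maxHeartbeats 1000000
open Finset Set

noncomputable def stmt7dotL {r : ℕ} (w : Fin r → ℝ) : (Fin r → ℝ) →L[ℝ] ℝ :=
  ∑ j, w j • ContinuousLinearMap.proj j

lemma stmt7dotL_apply {r : ℕ} (w t : Fin r → ℝ) : stmt7dotL w t = ∑ j, w j * t j := by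
  simp [stmt7dotL, ContinuousLinearMap.sum_apply, ContinuousLinearMap.proj_apply, smul_eq_mul]

lemma stmt7_exp_zpow (x : ℝ) (m : ℤ) : Real.exp x ^ m = Real.exp (m * x) := by
  rcases m with k | k
  · simp [Real.exp_nat_mul, zpow_natCast]
  · rw [zpow_negSucc, ← Real.exp_nat_mul, ← Real.exp_neg]
    congr 1
    push_cast
    ring

lemma stmt7_prod_pow_eq {r : ℕ} (p : Fin r → ℝ) (hp : ∀ j, 0 < p j) (m : Fin r → ℤ) :
    ∏ j, p j ^ m j = Real.exp (∑ j, (m j : ℝ) * Real.log (p j)) := by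
  rw [Real.exp_sum]
  refine Finset.prod_congr rfl fun j _ => ?_
  rw [← stmt7_exp_zpow, Real.exp_log (hp j)]



lemma stmt7_span_crit {r n : ℕ} (v : Fin n → Fin r → ℝ)
    (hspan : Submodule.span ℝ (Set.range v) = ⊤)
    {w : Fin r → ℝ} (hw : ∀ i, ∑ j, v i j * w j = 0) : w = 0 := by
  set g : (Fin r → ℝ) →ₗ[ℝ] ℝ := ∑ j, w j • LinearMap.proj j with hg
  have hgapp : ∀ x : Fin r → ℝ, g x = ∑ j, x j * w j := by
    intro x
    simp [hg, LinearMap.sum_apply, LinearMap.proj_apply, smul_eq_mul, mul_comm]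
  have hker : Submodule.span ℝ (Set.range v) ≤ LinearMap.ker g := by
    rw [Submodule.span_le]
    rintro x ⟨i, rfl⟩
    simp only [SetLike.mem_coe, LinearMap.mem_ker]
    rw [hgapp]; exact hw i
  funext j
  have : (Pi.single j 1 : Fin r → ℝ) ∈ LinearMap.ker g := hker (hspan ▸ Submodule.mem_top)
  have h2 : g (Pi.single j 1) = w j := by
    rw [hgapp]
    rw [Finset.sum_eq_single j] <;> simp (config := {contextual := true}) [Pi.single_apply]
  simpa [h2] using this

lemma stmt7_hull_dot_le {r n : ℕ} (hn : 0 < n) (v : Fin n → Fin r → ℝ) (t : Fin r → ℝ)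
    {x : Fin r → ℝ} (hx : x ∈ convexHull ℝ (Set.range v)) :
    ∃ i, ∑ j, x j * t j ≤ ∑ j, v i j * t j := by
  have hne : (Finset.univ : Finset (Fin n)).Nonempty := ⟨⟨0, hn⟩, Finset.mem_univ _⟩
  obtain ⟨i₀, -, hi₀⟩ := Finset.exists_max_image Finset.univ (fun i => ∑ j, v i j * t j) hne
  refine ⟨i₀, ?_⟩
  have hlin : IsLinearMap ℝ (fun y : Fin r → ℝ => ∑ j, y j * t j) := by
    constructor
    · intro a b; simp [add_mul, Finset.sum_add_distrib]
    · intro c a; simp [Finset.mul_sum, smul_eq_mul, mul_assoc]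
  have hsub : convexHull ℝ (Set.range v) ⊆ {y | ∑ j, y j * t j ≤ ∑ j, v i₀ j * t j} := by
    apply convexHull_min
    · rintro y ⟨i, rfl⟩; exact hi₀ i (Finset.mem_univ i)
    · exact convex_halfSpace_le hlin _
  exact hsub hx



lemma stmt7_dual_vec {r : ℕ} (f : (Fin r → ℝ) →ₗ[ℝ] ℝ) :
    ∃ u : Fin r → ℝ, (∀ x, f x = ∑ j, x j * u j) ∧ (u = 0 → ∀ x, f x = 0) := by
  refine ⟨fun j => f fun k => if j = k then 1 else 0, fun x => ?_, fun h x => ?_⟩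
  · rw [LinearMap.pi_apply_eq_sum_univ]; simp [smul_eq_mul]
  · rw [LinearMap.pi_apply_eq_sum_univ]
    refine Finset.sum_eq_zero fun j _ => ?_
    have := congrFun h j
    simp only [Pi.zero_apply] at this
    simp [this]

lemma stmt7_sep {r n : ℕ} (hn : 0 < n) (v : Fin n → Fin r → ℝ)
    (h0 : (0 : Fin r → ℝ) ∉ interior (convexHull ℝ (Set.range v))) :
    ∃ u : Fin r → ℝ, u ≠ 0 ∧ ∀ i, 0 ≤ ∑ j, v i j * u j := by
  set C := convexHull ℝ (Set.range v) with hC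
  have hCconv : Convex ℝ C := convex_convexHull ℝ _
  by_cases hmem : (0 : Fin r → ℝ) ∈ C
  · by_cases hint : (interior C).Nonempty
    · -- supporting hyperplane at 0
      obtain ⟨f, hf⟩ := geometric_hahn_banach_open_point hCconv.interior isOpen_interior h0
      simp only [map_zero] at hf
      obtain ⟨a, ha⟩ := hint
      have hfneg : ∀ x ∈ C, f x ≤ 0 := by
        intro x hx
        have hmemseq : ∀ k : ℕ, x + (1 / ((k : ℝ) + 1)) • (a - x) ∈ interior C := by
          intro k
          refine hCconv.add_smul_sub_mem_interior hx ha ⟨by positivity, ?_⟩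
          rw [div_le_one (by positivity)]
          linarith [Nat.cast_nonneg (α := ℝ) k]
        have htend : Filter.Tendsto (fun k : ℕ => f (x + (1 / ((k : ℝ) + 1)) • (a - x)))
            Filter.atTop (nhds (f x)) := by
          have hcont : Continuous fun c : ℝ => f (x + c • (a - x)) := by
            exact f.continuous.comp (by continuity)
          have h0' : Filter.Tendsto (fun k : ℕ => (1 / ((k : ℝ) + 1))) Filter.atTop (nhds 0) :=
            tendsto_one_div_add_atTop_nhds_zero_nat
          have := (hcont.tendsto 0).comp h0'
          simpa [Function.comp_def] using this
        exact le_of_tendsto htend (Filter.Eventually.of_forall fun k => (hf _ (hmemseq k)).le)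
      obtain ⟨u, hu1, hu2⟩ := stmt7_dual_vec (-f.toLinearMap)
      refine ⟨u, ?_, fun i => ?_⟩
      · intro h
        have := hu2 h a
        simp only [LinearMap.neg_apply, ContinuousLinearMap.coe_coe, neg_eq_zero] at this
        exact absurd this (ne_of_lt (hf a (by exact interior_mono (by rfl) ha)))
      · have := hu1 (v i)
        simp only [LinearMap.neg_apply, ContinuousLinearMap.coe_coe] at this
        have hvi : f (v i) ≤ 0 := hfneg _ (subset_convexHull ℝ _ ⟨i, rfl⟩)
        rw [← this]; linarith
    · -- interior empty : span is proper
      have hA : affineSpan ℝ (Set.range v) ≠ ⊤ := by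
        intro htop
        apply hint
        rw [hCconv.interior_nonempty_iff_affineSpan_eq_top, hC, affineSpan_convexHull]
        exact htop
      have h0aff : (0 : Fin r → ℝ) ∈ affineSpan ℝ (Set.range v) :=
        convexHull_subset_affineSpan _ hmem
      have hsub : Set.range v ⊆ (Submodule.span ℝ (Set.range v) : Set (Fin r → ℝ)) :=
        Submodule.subset_span
      have hW : Submodule.span ℝ (Set.range v) < ⊤ := by
        rw [lt_top_iff_ne_top]
        intro htop
        apply hA
        have hvs : vectorSpan ℝ (Set.range v) = ⊤ := by
          rw [← top_le_iff, ← htop, Submodule.span_le]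
          rintro x ⟨i, rfl⟩
          have : v i -ᵥ (0 : Fin r → ℝ) ∈ (affineSpan ℝ (Set.range v)).direction :=
            AffineSubspace.vsub_mem_direction (subset_affineSpan ℝ _ ⟨i, rfl⟩) h0aff
          rw [direction_affineSpan] at this
          simpa using this
        rw [eq_top_iff]
        intro x _
        have hx : x ∈ (affineSpan ℝ (Set.range v)).direction := by
          rw [direction_affineSpan, hvs]; trivial
        simpa using AffineSubspace.vadd_mem_of_mem_direction hx h0aff
      obtain ⟨φ, hφne, hφ⟩ := Submodule.exists_dual_map_eq_bot_of_lt_top hW inferInstance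
      obtain ⟨u, hu1, hu2⟩ := stmt7_dual_vec φ
      refine ⟨u, ?_, fun i => ?_⟩
      · intro h
        exact hφne (LinearMap.ext fun x => hu2 h x)
      · have hmap : φ (v i) = 0 := by
          have : φ (v i) ∈ Submodule.map φ (Submodule.span ℝ (Set.range v)) :=
            Submodule.mem_map_of_mem (hsub ⟨i, rfl⟩)
          rw [hφ] at this
          simpa using this
        rw [← hu1 (v i), hmap]
  · -- 0 not in C : strict separation
    have hCclosed : IsClosed C := ((Set.finite_range v).isCompact_convexHull ℝ).isClosed
    obtain ⟨f, c, hc0, hcb⟩ := geometric_hahn_banach_point_closed hCconv hCclosed hmem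
    simp only [map_zero] at hc0
    obtain ⟨u, hu1, hu2⟩ := stmt7_dual_vec f.toLinearMap
    have hfv : ∀ i, 0 < f (v i) := fun i =>
      lt_trans hc0 (hcb _ (subset_convexHull ℝ _ ⟨i, rfl⟩))
    refine ⟨u, ?_, fun i => ?_⟩
    · intro h
      have := hu2 h (v ⟨0, hn⟩)
      simp only [ContinuousLinearMap.coe_coe] at this
      exact absurd this (ne_of_gt (hfv ⟨0, hn⟩))
    · have := hu1 (v i)
      simp only [ContinuousLinearMap.coe_coe] at this
      rw [← this]
      exact (hfv i).le



lemma stmt7_norm_sq_le_sum {r : ℕ} (t : Fin r → ℝ) : ‖t‖ ^ 2 ≤ ∑ j, t j ^ 2 := by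
  rcases isEmpty_or_nonempty (Fin r) with h | h
  · have : t = 0 := Subsingleton.elim t 0
    simp [this]
  · obtain ⟨j₀, -, hj₀⟩ := Finset.exists_mem_eq_sup (Finset.univ : Finset (Fin r))
      Finset.univ_nonempty (fun j => ‖t j‖₊)
    have hnorm : ‖t‖ = |t j₀| := by
      rw [Pi.norm_def, hj₀]
      simp [Real.norm_eq_abs]
    rw [hnorm]
    calc |t j₀| ^ 2 = t j₀ ^ 2 := sq_abs _
      _ ≤ ∑ j, t j ^ 2 :=
        Finset.single_le_sum (fun j _ => sq_nonneg (t j)) (Finset.mem_univ j₀)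

lemma stmt7_exists_min {r n : ℕ} (hn : 0 < n) (γ : Fin n → ℝ) (hγ : ∀ i, 0 < γ i)
    (v : Fin n → Fin r → ℝ)
    (h0 : (0 : Fin r → ℝ) ∈ interior (convexHull ℝ (Set.range v))) :
    ∃ t : Fin r → ℝ, ∀ u : Fin r → ℝ,
      ∑ i, γ i * Real.exp (∑ j, v i j * t j) * (∑ j, v i j * u j) = 0 := by
  classical
  set ℓ : Fin n → (Fin r → ℝ) →L[ℝ] ℝ := fun i => stmt7dotL (v i) with hℓ
  set F : (Fin r → ℝ) → ℝ := fun t => ∑ i, γ i * Real.exp (ℓ i t) with hF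
  have i₀ : Fin n := ⟨0, hn⟩
  -- derivative
  have hasF : ∀ t, HasFDerivAt F (∑ i, (γ i * Real.exp (ℓ i t)) • (ℓ i)) t := by
    intro t
    have : ∀ i ∈ Finset.univ, HasFDerivAt (fun t => γ i * Real.exp (ℓ i t))
        ((γ i * Real.exp (ℓ i t)) • (ℓ i)) t := by
      intro i _
      have h1 : HasFDerivAt (fun t => (ℓ i) t) (ℓ i) t := (ℓ i).hasFDerivAt
      have h2 := h1.exp
      have h3 := h2.const_mul (γ i)
      simpa [smul_smul] using h3
    simpa using HasFDerivAt.fun_sum this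
  -- continuity
  have hFcont : Continuous F := by
    apply continuous_finset_sum
    intro i _
    exact continuous_const.mul (Real.continuous_exp.comp (ℓ i).continuous)
  -- positivity of F
  have hFpos : ∀ t, 0 < F t :=
    fun t => Finset.sum_pos (fun i _ => mul_pos (hγ i) (Real.exp_pos _)) ⟨i₀, Finset.mem_univ _⟩
  -- radius of ball inside hull
  rw [mem_interior_iff_mem_nhds, Metric.mem_nhds_iff] at h0
  obtain ⟨δ, hδ, hball⟩ := h0
  -- key coercivity estimate
  have key : ∀ t : Fin r → ℝ, ∃ i, δ / 2 * ‖t‖ ≤ ℓ i t := by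
    intro t
    by_cases ht : t = 0
    · exact ⟨i₀, by simp [ht]⟩
    · have htn : 0 < ‖t‖ := norm_pos_iff.2 ht
      set c : ℝ := δ / (2 * ‖t‖) with hc
      have hcpos : 0 < c := by positivity
      have hx : c • t ∈ Metric.ball (0 : Fin r → ℝ) δ := by
        rw [Metric.mem_ball, dist_zero_right, norm_smul, Real.norm_eq_abs,
          abs_of_pos hcpos, hc]
        rw [div_mul_eq_mul_div, mul_comm]
        rw [div_lt_iff₀ (by positivity)]
        nlinarith
      obtain ⟨i, hi⟩ := stmt7_hull_dot_le hn v t (hball hx)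
      refine ⟨i, ?_⟩
      rw [stmt7dotL_apply]
      refine le_trans ?_ hi
      have hsum : ∑ j, (c • t) j * t j = c * ∑ j, t j ^ 2 := by
        rw [Finset.mul_sum]
        refine Finset.sum_congr rfl fun j _ => ?_
        simp [smul_eq_mul, sq]
        ring
      rw [hsum]
      have h1 : ‖t‖ ^ 2 ≤ ∑ j, t j ^ 2 := stmt7_norm_sq_le_sum t
      have : c * ‖t‖ ^ 2 = δ / 2 * ‖t‖ := by
        rw [hc]; field_simp
      nlinarith
  -- min of γ
  have hne : (Finset.univ : Finset (Fin n)).Nonempty := ⟨i₀, Finset.mem_univ _⟩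
  set gm : ℝ := Finset.univ.inf' hne γ with hgm
  have hgmpos : 0 < gm := by
    rw [hgm, Finset.lt_inf'_iff]
    exact fun i _ => hγ i
  have hgmle : ∀ i, gm ≤ γ i := fun i => Finset.inf'_le γ (Finset.mem_univ i)
  -- lower bound on F
  have hFlow : ∀ t, gm * Real.exp (δ / 2 * ‖t‖) ≤ F t := by
    intro t
    obtain ⟨i, hi⟩ := key t
    calc gm * Real.exp (δ / 2 * ‖t‖) ≤ γ i * Real.exp (ℓ i t) := by
          apply mul_le_mul (hgmle i) (Real.exp_le_exp.2 hi) (Real.exp_pos _).le (hγ i).le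
      _ ≤ ∑ i, γ i * Real.exp (ℓ i t) :=
          Finset.single_le_sum (f := fun i => γ i * Real.exp (ℓ i t))
            (fun i _ => (mul_pos (hγ i) (Real.exp_pos _)).le) (Finset.mem_univ i)
      _ = F t := rfl
  -- choice of radius
  set R : ℝ := max 1 ((2 / δ) * Real.log (F 0 / gm + 1)) with hR
  have hR1 : (1 : ℝ) ≤ R := le_max_left _ _
  have hRpos : 0 < R := lt_of_lt_of_le one_pos hR1
  have hout : ∀ t : Fin r → ℝ, R ≤ ‖t‖ → F 0 < F t := by
    intro t htR
    have hlog : Real.log (F 0 / gm + 1) ≤ δ / 2 * ‖t‖ := by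
      have h1 : (2 / δ) * Real.log (F 0 / gm + 1) ≤ R := le_max_right _ _
      have h2 : δ / 2 * ((2 / δ) * Real.log (F 0 / gm + 1)) = Real.log (F 0 / gm + 1) := by
        field_simp
      nlinarith [mul_le_mul_of_nonneg_left (le_trans h1 htR) (le_of_lt (by positivity : (0:ℝ) < δ/2))]
    have hexp : F 0 / gm + 1 ≤ Real.exp (δ / 2 * ‖t‖) := by
      rw [← Real.exp_log (x := F 0 / gm + 1) (by have := div_pos (hFpos 0) hgmpos; linarith)]
      exact Real.exp_le_exp.2 hlog
    have := hFlow t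
    have h3 : gm * (F 0 / gm + 1) ≤ gm * Real.exp (δ / 2 * ‖t‖) :=
      mul_le_mul_of_nonneg_left hexp hgmpos.le
    have h4 : gm * (F 0 / gm + 1) = F 0 + gm := by
      field_simp
    nlinarith
  -- compact minimization
  have hK : IsCompact (Metric.closedBall (0 : Fin r → ℝ) R) := isCompact_closedBall _ _
  obtain ⟨t₀, ht₀K, ht₀min⟩ := hK.exists_isMinOn ⟨0, Metric.mem_closedBall_self hRpos.le⟩
    hFcont.continuousOn
  have ht₀F0 : F t₀ ≤ F 0 := ht₀min (Metric.mem_closedBall_self hRpos.le)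
  have hlt : ‖t₀‖ < R := by
    by_contra h
    push_neg at h
    exact absurd ht₀F0 (not_le.2 (hout t₀ h))
  have hnhds : Metric.closedBall (0 : Fin r → ℝ) R ∈ nhds t₀ := by
    refine Filter.mem_of_superset (Metric.isOpen_ball.mem_nhds ?_) Metric.ball_subset_closedBall
    rwa [Metric.mem_ball, dist_zero_right]
  have hloc : IsLocalMin F t₀ := ht₀min.isLocalMin hnhds
  have hder0 := hloc.hasFDerivAt_eq_zero (hasF t₀)
  refine ⟨t₀, fun u => ?_⟩
  have := congrArg (fun (L : (Fin r → ℝ) →L[ℝ] ℝ) => L u) hder0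
  simp only [ContinuousLinearMap.sum_apply, ContinuousLinearMap.smul_apply, smul_eq_mul,
    ContinuousLinearMap.zero_apply] at this
  rw [← this]
  refine Finset.sum_congr rfl fun i _ => ?_
  rw [hℓ, stmt7dotL_apply, stmt7dotL_apply]

lemma stmt7_uniq {r n : ℕ} (γ : Fin n → ℝ) (hγ : ∀ i, 0 < γ i) (v : Fin n → (Fin r → ℤ))
    (hspan : Submodule.span ℝ (Set.range (fun i => fun j => ((v i j : ℝ)))) = ⊤)
    {p q : Fin r → ℝ} (hp : ∀ j, 0 < p j) (hq : ∀ j, 0 < q j)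
    (hpc : ∀ u : Fin r → ℝ, ∑ i, γ i * (∏ j, p j ^ (v i j)) * (∑ j, (v i j : ℝ) * u j) = 0)
    (hqc : ∀ u : Fin r → ℝ, ∑ i, γ i * (∏ j, q j ^ (v i j)) * (∑ j, (v i j : ℝ) * u j) = 0) :
    p = q := by
  set a : Fin n → ℝ := fun i => ∑ j, (v i j : ℝ) * Real.log (p j) with ha
  set b : Fin n → ℝ := fun i => ∑ j, (v i j : ℝ) * Real.log (q j) with hb
  set w : Fin r → ℝ := fun j => Real.log (q j) - Real.log (p j) with hw
  have hdw : ∀ i, ∑ j, (v i j : ℝ) * w j = b i - a i := by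
    intro i
    simp only [hw, ha, hb, mul_sub, Finset.sum_sub_distrib]
  have hP : ∀ i, ∏ j, p j ^ (v i j) = Real.exp (a i) := fun i => stmt7_prod_pow_eq p hp (v i)
  have hQ : ∀ i, ∏ j, q j ^ (v i j) = Real.exp (b i) := fun i => stmt7_prod_pow_eq q hq (v i)
  have h1 : ∑ i, γ i * Real.exp (a i) * (b i - a i) = 0 := by
    have := hpc w
    simp only [hP, hdw] at this
    exact this
  have h2 : ∑ i, γ i * Real.exp (b i) * (b i - a i) = 0 := by
    have := hqc w
    simp only [hQ, hdw] at this
    exact this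
  have h3 : ∑ i, γ i * ((Real.exp (b i) - Real.exp (a i)) * (b i - a i)) = 0 := by
    have : ∑ i, γ i * ((Real.exp (b i) - Real.exp (a i)) * (b i - a i)) =
        (∑ i, γ i * Real.exp (b i) * (b i - a i)) - ∑ i, γ i * Real.exp (a i) * (b i - a i) := by
      rw [← Finset.sum_sub_distrib]
      exact Finset.sum_congr rfl fun i _ => by ring
    rw [this, h1, h2, sub_zero]
  have hnn : ∀ i ∈ Finset.univ, 0 ≤ γ i * ((Real.exp (b i) - Real.exp (a i)) * (b i - a i)) := by
    intro i _
    refine mul_nonneg (hγ i).le ?_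
    rcases le_total (a i) (b i) with h | h
    · exact mul_nonneg (sub_nonneg.2 (Real.exp_le_exp.2 h)) (sub_nonneg.2 h)
    · have h1 := sub_nonpos.2 (Real.exp_le_exp.2 h)
      have h2 := sub_nonpos.2 h
      nlinarith
  have hba : ∀ i, b i = a i := by
    intro i
    have := (Finset.sum_eq_zero_iff_of_nonneg hnn).1 h3 i (Finset.mem_univ i)
    have h4 : (Real.exp (b i) - Real.exp (a i)) * (b i - a i) = 0 := by
      rcases mul_eq_zero.1 this with h | h
      · exact absurd h (ne_of_gt (hγ i))
      · exact h
    rcases mul_eq_zero.1 h4 with h | h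
    · exact Real.exp_injective (by linarith)
    · linarith
  have hw0 : w = 0 := by
    refine stmt7_span_crit (fun i => fun j => ((v i j : ℝ))) hspan fun i => ?_
    rw [hdw i, hba i, sub_self]
  funext j
  have := congrFun hw0 j
  simp only [hw, Pi.zero_apply, sub_eq_zero] at this
  rw [← Real.exp_log (hp j), ← Real.exp_log (hq j), this]

/-- Corollary 7.5 (c:converse): a positive Laurent polynomial over ℝ has a unique positive
critical point iff its Newton polytope is full-dimensional with `0` in its interior. -/
theorem stmt_7 (r n : ℕ) (hn : 0 < n) (γ : Fin n → ℝ) (hγ : ∀ i, 0 < γ i)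
    (v : Fin n → (Fin r → ℤ)) :
    (∃! p : Fin r → ℝ, (∀ j, 0 < p j) ∧
        ∀ u : Fin r → ℝ,
          ∑ i, γ i * (∏ j, p j ^ (v i j)) * (∑ j, (v i j : ℝ) * u j) = 0) ↔
      (affineSpan ℝ (Set.range (fun i => fun j => (v i j : ℝ))) = ⊤ ∧
        (0 : Fin r → ℝ) ∈
          interior (convexHull ℝ (Set.range (fun i => fun j => (v i j : ℝ))))) := by
  constructor
  · rintro ⟨p, ⟨hp, hcrit⟩, huniq⟩
    have h0 : (0 : Fin r → ℝ) ∈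
        interior (convexHull ℝ (Set.range (fun i => fun j => (v i j : ℝ)))) := by
      by_contra h0
      obtain ⟨u, hune, hupos⟩ := stmt7_sep hn (fun i => fun j => ((v i j : ℝ))) h0
      have hPpos : ∀ i, (0:ℝ) < ∏ j, p j ^ (v i j) :=
        fun i => Finset.prod_pos fun j _ => zpow_pos (hp j) _
      have hd0 : ∀ i, ∑ j, (v i j : ℝ) * u j = 0 := by
        have hnn : ∀ i ∈ Finset.univ,
            (0:ℝ) ≤ γ i * (∏ j, p j ^ (v i j)) * (∑ j, (v i j : ℝ) * u j) :=
          fun i _ => mul_nonneg (mul_pos (hγ i) (hPpos i)).le (hupos i)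
        intro i
        have := (Finset.sum_eq_zero_iff_of_nonneg hnn).1 (hcrit u) i (Finset.mem_univ i)
        rcases mul_eq_zero.1 this with h | h
        · exact absurd h (ne_of_gt (mul_pos (hγ i) (hPpos i)))
        · exact h
      set q : Fin r → ℝ := fun j => p j * Real.exp (u j) with hqdef
      have hqpos : ∀ j, 0 < q j := fun j => mul_pos (hp j) (Real.exp_pos _)
      have hqP : ∀ i, ∏ j, q j ^ (v i j) = ∏ j, p j ^ (v i j) := by
        intro i
        have : ∏ j, q j ^ (v i j) =
            (∏ j, p j ^ (v i j)) * ∏ j, Real.exp (u j) ^ (v i j) := by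
          rw [← Finset.prod_mul_distrib]
          exact Finset.prod_congr rfl fun j _ => mul_zpow _ _ _
        rw [this]
        have : ∏ j, Real.exp (u j) ^ (v i j) = Real.exp (∑ j, (v i j : ℝ) * u j) := by
          rw [Real.exp_sum]
          exact Finset.prod_congr rfl fun j _ => by rw [stmt7_exp_zpow]
        rw [this, hd0 i, Real.exp_zero, mul_one]
      have hqcrit : ∀ u' : Fin r → ℝ,
          ∑ i, γ i * (∏ j, q j ^ (v i j)) * (∑ j, (v i j : ℝ) * u' j) = 0 := by
        intro u'
        simp only [hqP]
        exact hcrit u'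
      have hqp : q = p := huniq q ⟨hqpos, hqcrit⟩
      obtain ⟨j, hj⟩ := Function.ne_iff.1 hune
      have h5 : p j * Real.exp (u j) = p j := congrFun hqp j
      have h6 : Real.exp (u j) = 1 :=
        mul_left_cancel₀ (ne_of_gt (hp j)) (by rw [mul_one]; exact h5)
      exact hj ((Real.exp_eq_one_iff _).1 h6)
    refine ⟨?_, h0⟩
    have := (convex_convexHull ℝ _).interior_nonempty_iff_affineSpan_eq_top.1 ⟨0, h0⟩
    rwa [affineSpan_convexHull] at this
  · rintro ⟨hspan_aff, h0⟩
    have hspan : Submodule.span ℝ (Set.range (fun i => fun j => ((v i j : ℝ)))) = ⊤ := by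
      refine Submodule.eq_top_iff'.2 fun x => ?_
      have hle : affineSpan ℝ (Set.range (fun i => fun j => ((v i j : ℝ)))) ≤
          (Submodule.span ℝ (Set.range (fun i => fun j => ((v i j : ℝ))))).toAffineSubspace :=
        affineSpan_le.2 (fun y hy => Submodule.mem_toAffineSubspace.2 (Submodule.subset_span hy))
      have hx : x ∈ affineSpan ℝ (Set.range (fun i => fun j => ((v i j : ℝ)))) := by
        rw [hspan_aff]; trivial
      exact Submodule.mem_toAffineSubspace.1 (hle hx)
    obtain ⟨t, ht⟩ := stmt7_exists_min hn γ hγ (fun i => fun j => ((v i j : ℝ))) h0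
    set p : Fin r → ℝ := fun j => Real.exp (t j) with hpdef
    have hppos : ∀ j, 0 < p j := fun j => Real.exp_pos _
    have hpcrit : ∀ u : Fin r → ℝ,
        ∑ i, γ i * (∏ j, p j ^ (v i j)) * (∑ j, (v i j : ℝ) * u j) = 0 := by
      intro u
      have hprod : ∀ i, ∏ j, p j ^ (v i j) = Real.exp (∑ j, (v i j : ℝ) * t j) := by
        intro i
        rw [stmt7_prod_pow_eq p hppos (v i)]
        congr 1
        exact Finset.sum_congr rfl fun j _ => by rw [hpdef]; rw [Real.log_exp]
      simp only [hprod]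
      exact ht u
    exact ⟨p, ⟨hppos, hpcrit⟩, fun q hq => stmt7_uniq γ hγ v hspan hq.1 hppos hq.2 hpcrit⟩
end

section
/- Let v_1,...,v_n ∈ ℝ^r with 0 in the interior of their convex hull, and let δ_1,...,δ_n, δ'_1,...,δ'_n ∈ ℝ_{≥0} satisfy: (a) for each i, δ'_i − δ_i = ⟨v_i, e⟩ for a fixed vector e ∈ ℝ^r; (b) both families (δ_i) and (δ'_i) satisfy the tropical critical conditions, namely for every ε ≥ 0, the relative interior of convexHull {v_i : δ_i = ε} meets span {v_i : δ_i < ε}, and similarly for (δ'_i). Then δ_i = δ'_i for all i, and consequently e = 0. -/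
/-- The tropical critical conditions for exponents `v` and level values `δ`: for every `ε ≥ 0`
the relative interior of the convex hull of `{v i : δ i = ε}` (by convention `{0}` if this set is
empty) meets the span of `{v i : δ i < ε}`. -/
def TropCritCond {r n : ℕ} (v : Fin n → (Fin r → ℝ)) (δ : Fin n → ℝ) : Prop :=
  ∀ ε : ℝ, 0 ≤ ε → ∃ x : Fin r → ℝ,
    x ∈ Submodule.span ℝ {w : Fin r → ℝ | ∃ i, δ i < ε ∧ w = v i} ∧
    (((∀ i, δ i ≠ ε) ∧ x = 0) ∨
      ∃ w : Fin n → ℝ, (∀ i, (δ i = ε → 0 < w i) ∧ (δ i ≠ ε → w i = 0)) ∧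
        (∑ i, w i) = 1 ∧ (∑ i, w i • v i) = x)

/-- The linear functional `x ↦ ∑ j, x j * e j`. -/
noncomputable def lfe {r : ℕ} (e : Fin r → ℝ) : (Fin r → ℝ) →ₗ[ℝ] ℝ where
  toFun x := ∑ j, x j * e j
  map_add' x y := by simp [add_mul, Finset.sum_add_distrib]
  map_smul' c x := by simp [Finset.mul_sum, mul_assoc]

lemma lfe_apply {r : ℕ} (e x : Fin r → ℝ) : lfe e x = ∑ j, x j * e j := rfl

lemma lfe_neg {r : ℕ} (e x : Fin r → ℝ) : lfe (-e) x = - lfe e x := by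
  simp [lfe_apply, mul_neg]

/-- Auxiliary contradiction lemma: if `lfe e` vanishes on all vectors below level `ε` (for either
family) but is nonzero on some vector at `δ`-level exactly `ε`, we get a contradiction. -/
lemma aux_contra {r n : ℕ} (v : Fin n → (Fin r → ℝ)) (δ δ' : Fin n → ℝ)
    (e : Fin r → ℝ) (ha : ∀ i, δ' i - δ i = lfe e (v i))
    (h1 : TropCritCond v δ) (ε : ℝ) (hε : 0 ≤ ε)
    (hlow : ∀ i, δ i < ε → lfe e (v i) = 0)
    (hlow' : ∀ i, δ' i < ε → lfe e (v i) = 0)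
    (i₀ : Fin n) (hi₀ : δ i₀ = ε) (hne : lfe e (v i₀) ≠ 0) : False := by
  obtain ⟨x, hx, hdisj⟩ := h1 ε hε
  have hφx : lfe e x = 0 := by
    have hle : Submodule.span ℝ {w : Fin r → ℝ | ∃ i, δ i < ε ∧ w = v i}
        ≤ LinearMap.ker (lfe e) := by
      rw [Submodule.span_le]
      rintro w ⟨i, hi, rfl⟩
      exact hlow i hi
    simpa using hle hx
  rcases hdisj with ⟨h, _⟩ | ⟨w, hw, hsum, hx'⟩
  · exact h i₀ hi₀
  have hpos : ∀ i, δ i = ε → 0 ≤ lfe e (v i) := by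
    intro i hi
    by_contra h
    push_neg at h
    have hlt : δ' i < ε := by have := ha i; linarith
    exact absurd (hlow' i hlt) (ne_of_lt h)
  have hterm : ∀ i, 0 ≤ w i * lfe e (v i) := by
    intro i
    by_cases hi : δ i = ε
    · exact mul_nonneg ((hw i).1 hi).le (hpos i hi)
    · simp [(hw i).2 hi]
  have hzero : ∑ i, w i * lfe e (v i) = 0 := by
    rw [← hφx, ← hx', map_sum]
    simp
  have hpos0 : 0 < w i₀ * lfe e (v i₀) :=
    mul_pos ((hw i₀).1 hi₀) (lt_of_le_of_ne (hpos i₀ hi₀) (Ne.symm hne))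
  have : 0 < ∑ i, w i * lfe e (v i) :=
    Finset.sum_pos' (fun i _ => hterm i) ⟨i₀, Finset.mem_univ _, hpos0⟩
  linarith

/-- Core of Lemma 4.13 (l:uniqueness): two families of levels satisfying the tropical critical
conditions and differing by `⟨v_i, e⟩` must coincide, and then `e = 0`. -/
theorem stmt_8 (r n : ℕ) (v : Fin n → (Fin r → ℝ))
    (h0 : (0 : Fin r → ℝ) ∈ interior (convexHull ℝ (Set.range v)))
    (δ δ' : Fin n → ℝ) (hδ : ∀ i, 0 ≤ δ i) (hδ' : ∀ i, 0 ≤ δ' i)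
    (e : Fin r → ℝ) (ha : ∀ i, δ' i - δ i = ∑ j, v i j * e j)
    (h1 : TropCritCond v δ) (h2 : TropCritCond v δ') :
    (∀ i, δ i = δ' i) ∧ e = 0 := by
  have ha' : ∀ i, δ' i - δ i = lfe e (v i) := fun i => ha i
  -- Step 1: the functional vanishes on every `v i`.
  have key : ∀ i, lfe e (v i) = 0 := by
    by_contra hB
    push_neg at hB
    obtain ⟨i₁, hi₁⟩ := hB
    set B : Finset (Fin n) := Finset.univ.filter (fun i => lfe e (v i) ≠ 0) with hBdef
    have hBne : B.Nonempty := ⟨i₁, by simp [hBdef, hi₁]⟩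
    set ε := B.inf' hBne (fun i => min (δ i) (δ' i)) with hεdef
    obtain ⟨i₀, hi₀B, hi₀⟩ := Finset.exists_mem_eq_inf' hBne (fun i => min (δ i) (δ' i))
    have hi₀ne : lfe e (v i₀) ≠ 0 := by
      have := hi₀B
      simp only [hBdef, Finset.mem_filter] at this
      exact this.2
    have hεeq : ε = min (δ i₀) (δ' i₀) := hi₀
    have hε0 : 0 ≤ ε := by rw [hεeq]; exact le_min (hδ i₀) (hδ' i₀)
    have hlow : ∀ i, δ i < ε → lfe e (v i) = 0 := by
      intro i hi
      by_contra h
      have hiB : i ∈ B := by simp [hBdef, h]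
      have h1' := Finset.inf'_le (fun i => min (δ i) (δ' i)) hiB
      have : ε ≤ δ i := le_trans h1' (min_le_left _ _)
      linarith
    have hlow' : ∀ i, δ' i < ε → lfe e (v i) = 0 := by
      intro i hi
      by_contra h
      have hiB : i ∈ B := by simp [hBdef, h]
      have h1' := Finset.inf'_le (fun i => min (δ i) (δ' i)) hiB
      have : ε ≤ δ' i := le_trans h1' (min_le_right _ _)
      linarith
    rcases min_choice (δ i₀) (δ' i₀) with hc | hc
    · exact aux_contra v δ δ' e ha' h1 ε hε0 hlow hlow' i₀ (by rw [hεeq, hc]) hi₀ne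
    · have ha2 : ∀ i, δ i - δ' i = lfe (-e) (v i) := by
        intro i; rw [lfe_neg]; have := ha' i; linarith
      refine aux_contra v δ' δ (-e) ha2 h2 ε hε0 ?_ ?_ i₀ (by rw [hεeq, hc]) ?_
      · intro i hi; rw [lfe_neg, hlow' i hi, neg_zero]
      · intro i hi; rw [lfe_neg, hlow i hi, neg_zero]
      · rw [lfe_neg]; simpa using hi₀ne
  -- Step 2: the span of the `v i` is everything.
  have hspan : Submodule.span ℝ (Set.range v) = ⊤ := by
    apply Submodule.eq_top_of_nonempty_interior'
    refine ⟨0, ?_⟩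
    have hsub : convexHull ℝ (Set.range v) ⊆ (Submodule.span ℝ (Set.range v) : Set _) :=
      convexHull_min Submodule.subset_span (Submodule.span ℝ (Set.range v)).convex
    exact interior_mono hsub h0
  -- Step 3: conclude `e = 0`.
  have hee : lfe e e = 0 := by
    have hle : Submodule.span ℝ (Set.range v) ≤ LinearMap.ker (lfe e) := by
      rw [Submodule.span_le]
      rintro w ⟨i, rfl⟩
      exact key i
    have : e ∈ Submodule.span ℝ (Set.range v) := hspan ▸ Submodule.mem_top
    simpa using hle this
  have he : e = 0 := by
    funext j
    have hnn : ∀ j ∈ Finset.univ, 0 ≤ e j * e j := fun j _ => mul_self_nonneg (e j)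
    have := (Finset.sum_eq_zero_iff_of_nonneg hnn).mp hee j (Finset.mem_univ j)
    exact mul_self_eq_zero.mp this
  refine ⟨fun i => ?_, he⟩
  have := ha' i
  rw [key i] at this
  linarith
end

section
/- Let v_1,...,v_n ∈ ℝ^r span ℝ^r, let c_1,...,c_n > 0, and for ε ≥ 0 let δ_1,...,δ_n ∈ ℝ_{≥0} be given with B_{<ε} := span {v_i : δ_i < ε}. Suppose for every ε ≥ 0 that 0 lies in the relative interior of the convex hull of the images of {v_i : δ_i = ε} in the quotient ℝ^r / B_{<ε}. Then there exists a unique d ∈ ℝ^r such that for every ε ≥ 0, Σ_{i : δ_i = ε} c_i · exp(⟨v_i, d⟩) · v_i ∈ B_{<ε}. -/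
open scoped Classical
open scoped RealInnerProductSpace
open Filter


theorem galkin_lemma {E : Type*} [NormedAddCommGroup E] [InnerProductSpace ℝ E]
    [FiniteDimensional ℝ E] {ι : Type*} [Fintype ι] (v : ι → E)
    (hspan : Submodule.span ℝ (Set.range v) = ⊤)
    (c : ι → ℝ) (hc : ∀ i, 0 < c i) (w : ι → ℝ) (hw : ∀ i, 0 < w i)
    (hrel : ∑ i, w i • v i = 0) :
    ∃! d : E, ∑ i, (c i * Real.exp ⟪v i, d⟫) • v i = 0 := by
  classical
  -- inner product of a coefficient sum
  have inner_sum' : ∀ (a : ι → ℝ) (u : E), ⟪∑ i, a i • v i, u⟫ = ∑ i, a i * ⟪v i, u⟫ := by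
    intro a u
    rw [sum_inner]
    simp [real_inner_smul_left]
  -- perpendicular to all v i implies zero
  have hperp : ∀ u : E, (∀ i, ⟪v i, u⟫ = 0) → u = 0 := by
    intro u hu
    have hall : ∀ x : E, ⟪x, u⟫ = 0 := by
      intro x
      have hx : x ∈ Submodule.span ℝ (Set.range v) := by rw [hspan]; trivial
      induction hx using Submodule.span_induction with
      | mem x hx => obtain ⟨i, rfl⟩ := hx; exact hu i
      | zero => simp
      | add x y _ _ hx hy => rw [inner_add_left, hx, hy]; ring
      | smul a x _ hx => rw [real_inner_smul_left, hx]; ring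
    exact inner_self_eq_zero (𝕜 := ℝ) |>.mp (hall u)
  have hterm : ∀ a b : ℝ, 0 ≤ (Real.exp (a + b) - Real.exp a) * b := by
    intro a b
    rcases lt_trichotomy b 0 with h | h | h
    · have : Real.exp (a + b) < Real.exp a := Real.exp_lt_exp.2 (by linarith)
      nlinarith
    · simp [h]
    · have : Real.exp a < Real.exp (a + b) := Real.exp_lt_exp.2 (by linarith)
      nlinarith
  have hterm0 : ∀ a b : ℝ, (Real.exp (a + b) - Real.exp a) * b = 0 → b = 0 := by
    intro a b h
    rcases lt_trichotomy b 0 with hb | hb | hb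
    · have : Real.exp (a + b) < Real.exp a := Real.exp_lt_exp.2 (by linarith)
      nlinarith
    · exact hb
    · have : Real.exp a < Real.exp (a + b) := Real.exp_lt_exp.2 (by linarith)
      nlinarith
  -- uniqueness
  have uniq : ∀ d₁ d₂ : E, (∑ i, (c i * Real.exp ⟪v i, d₁⟫) • v i = 0) →
      (∑ i, (c i * Real.exp ⟪v i, d₂⟫) • v i = 0) → d₁ = d₂ := by
    intro d₁ d₂ h₁ h₂
    set u := d₂ - d₁ with hu
    have hinner : ∀ i, ⟪v i, d₂⟫ = ⟪v i, d₁⟫ + ⟪v i, u⟫ := by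
      intro i; rw [hu, inner_sub_right]; ring
    have hsum0 : ∑ i, (c i * (Real.exp (⟪v i, d₁⟫ + ⟪v i, u⟫) - Real.exp ⟪v i, d₁⟫)) * ⟪v i, u⟫ = 0 := by
      have e1 : ⟪∑ i, (c i * Real.exp ⟪v i, d₁⟫) • v i, u⟫ = 0 := by rw [h₁]; simp
      have e2 : ⟪∑ i, (c i * Real.exp ⟪v i, d₂⟫) • v i, u⟫ = 0 := by rw [h₂]; simp
      rw [inner_sum'] at e1 e2
      have : ∑ i, (c i * Real.exp ⟪v i, d₂⟫ * ⟪v i, u⟫ - c i * Real.exp ⟪v i, d₁⟫ * ⟪v i, u⟫) = 0 := by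
        rw [Finset.sum_sub_distrib, e1, e2]; ring
      rw [← this]
      apply Finset.sum_congr rfl
      intro i _
      rw [hinner i]; ring
    have hnn : ∀ i ∈ Finset.univ, (0:ℝ) ≤ (c i * (Real.exp (⟪v i, d₁⟫ + ⟪v i, u⟫) - Real.exp ⟪v i, d₁⟫)) * ⟪v i, u⟫ := by
      intro i _
      have := hterm ⟪v i, d₁⟫ ⟪v i, u⟫
      nlinarith [ (hc i).le ]
    have hz := (Finset.sum_eq_zero_iff_of_nonneg hnn).mp hsum0
    have hu0 : u = 0 := by
      apply hperp
      intro i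
      have := hz i (Finset.mem_univ i)
      have h' : (Real.exp (⟪v i, d₁⟫ + ⟪v i, u⟫) - Real.exp ⟪v i, d₁⟫) * ⟪v i, u⟫ = 0 := by
        rcases mul_eq_zero.mp (by linarith [this] : (c i) * ((Real.exp (⟪v i, d₁⟫ + ⟪v i, u⟫) - Real.exp ⟪v i, d₁⟫) * ⟪v i, u⟫) = 0) with h | h
        · exact absurd h (ne_of_gt (hc i))
        · exact h
      exact hterm0 _ _ h'
    have : d₂ = d₁ := by rwa [sub_eq_zero] at hu0
    exact this.symm
  -- existence
  rcases subsingleton_or_nontrivial E with hE | hE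
  · refine ⟨0, Subsingleton.elim _ _, fun y _ => Subsingleton.elim _ _⟩
  -- nonempty index type
  have hι : Nonempty ι := by
    by_contra h
    rw [not_nonempty_iff] at h
    rw [Set.range_eq_empty, Submodule.span_empty] at hspan
    exact (bot_ne_top (α := Submodule ℝ E)) hspan
  obtain ⟨i₀⟩ := hι
  set W : ℝ := ∑ i, w i with hW
  have hWpos : 0 < W := Finset.sum_pos (fun i _ => hw i) ⟨i₀, Finset.mem_univ i₀⟩
  set cm : ℝ := Finset.univ.inf' ⟨i₀, Finset.mem_univ i₀⟩ c with hcm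
  have hcmpos : 0 < cm := by
    obtain ⟨j, _, hj⟩ := Finset.exists_mem_eq_inf' ⟨i₀, Finset.mem_univ i₀⟩ c
    rw [hcm, hj]; exact hc j
  -- the auxiliary function g
  set g : E → ℝ := fun u => ∑ i, w i * max ⟪v i, u⟫ 0 with hg
  have hg_cont : Continuous g := by
    apply continuous_finset_sum
    intro i _
    exact continuous_const.mul ((Continuous.inner continuous_const continuous_id).max continuous_const)
  have hg_pos : ∀ u ∈ Metric.sphere (0:E) 1, 0 < g u := by
    intro u hu
    have hne : u ≠ 0 := by
      intro h; rw [h] at hu; simp at hu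
    have hexists : ∃ i, 0 < ⟪v i, u⟫ := by
      by_contra hcon
      push_neg at hcon
      have hle : ∀ i, ⟪v i, u⟫ ≤ 0 := hcon
      have hz : ∑ i, w i * ⟪v i, u⟫ = 0 := by
        have : ⟪∑ i, w i • v i, u⟫ = 0 := by rw [hrel]; simp
        rw [inner_sum'] at this; exact this
      have hall0 : ∀ i, ⟪v i, u⟫ = 0 := by
        intro i
        have hnn : ∀ j ∈ Finset.univ, (0:ℝ) ≤ w j * (- ⟪v j, u⟫) := fun j _ =>
          mul_nonneg (hw j).le (by linarith [hle j])
        have hz' : ∑ j, w j * (- ⟪v j, u⟫) = 0 := by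
          rw [← neg_eq_zero, ← Finset.sum_neg_distrib]
          rw [← hz]
          apply Finset.sum_congr rfl; intro j _; ring
        have := (Finset.sum_eq_zero_iff_of_nonneg hnn).mp hz' i (Finset.mem_univ i)
        have hwi := hw i
        nlinarith [hle i]
      exact hne (hperp u hall0)
    obtain ⟨i, hi⟩ := hexists
    apply Finset.sum_pos'
    · intro j _
      have : (0:ℝ) ≤ max ⟪v j, u⟫ 0 := le_max_right _ _
      nlinarith [hw j]
    · refine ⟨i, Finset.mem_univ i, ?_⟩
      have : max ⟪v i, u⟫ 0 = ⟪v i, u⟫ := max_eq_left hi.le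
      rw [this]
      exact mul_pos (hw i) hi
  -- minimum of g on sphere
  obtain ⟨u₀, hu₀s, hu₀min'⟩ := (isCompact_sphere (0:E) 1).exists_isMinOn
    (NormedSpace.sphere_nonempty.mpr zero_le_one) hg_cont.continuousOn
  have hu₀min : ∀ y ∈ Metric.sphere (0:E) 1, g u₀ ≤ g y := fun y hy => hu₀min' hy
  set α : ℝ := g u₀ with hα
  have hαpos : 0 < α := hg_pos u₀ hu₀s
  -- lower bound : for d ≠ 0, exists j with inner ≥ (α/W) ‖d‖
  have hlb : ∀ d : E, ∃ j, α / W * ‖d‖ ≤ ⟪v j, d⟫ ∨ d = 0 := by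
    intro d
    by_cases hd : d = 0
    · exact ⟨i₀, Or.inr hd⟩
    have hnd : 0 < ‖d‖ := norm_pos_iff.mpr hd
    set u : E := ‖d‖⁻¹ • d with hudef
    have hus : u ∈ Metric.sphere (0:E) 1 := by
      simp [hudef, norm_smul, abs_of_pos (inv_pos.mpr hnd), inv_mul_cancel₀ (ne_of_gt hnd)]
    have hgu : α ≤ g u := hu₀min u hus
    -- homogeneity : g d = ‖d‖ * g u
    have hhom : g d = ‖d‖ * g u := by
      rw [hg]
      rw [Finset.mul_sum]
      apply Finset.sum_congr rfl
      intro i _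
      have : ⟪v i, d⟫ = ‖d‖ * ⟪v i, u⟫ := by
        rw [hudef, real_inner_smul_right]
        field_simp
      rw [this]
      rcases le_total ⟪v i, u⟫ 0 with h | h
      · rw [max_eq_right (by nlinarith), max_eq_right h]; ring
      · rw [max_eq_left (by nlinarith), max_eq_left h]; ring
    have hgd : α * ‖d‖ ≤ g d := by rw [hhom]; nlinarith
    -- bound g d ≤ W * M
    set M : ℝ := Finset.univ.sup' ⟨i₀, Finset.mem_univ i₀⟩ (fun i => max ⟪v i, d⟫ 0) with hM
    have hgM : g d ≤ W * M := by
      rw [hg, hW, Finset.sum_mul]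
      apply Finset.sum_le_sum
      intro i _
      have h1 : max ⟪v i, d⟫ 0 ≤ M := by
        rw [hM]; exact Finset.le_sup' (fun j => max ⟪v j, d⟫ 0) (Finset.mem_univ i)
      have h2 : (0:ℝ) ≤ max ⟪v i, d⟫ 0 := le_max_right _ _
      nlinarith [hw i]
    obtain ⟨j, _, hj⟩ := Finset.exists_mem_eq_sup' (⟨i₀, Finset.mem_univ i₀⟩ : Finset.Nonempty Finset.univ) (fun i => max ⟪v i, d⟫ 0)
    have hMpos : 0 < M := by
      have : α * ‖d‖ ≤ W * M := le_trans hgd hgM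
      nlinarith
    have hMj : M = ⟪v j, d⟫ := by
      rw [hM, hj]
      rcases le_total ⟪v j, d⟫ 0 with h | h
      · exfalso; rw [hM, hj] at hMpos; rw [max_eq_right h] at hMpos; exact lt_irrefl _ hMpos
      · exact max_eq_left h
    refine ⟨j, Or.inl ?_⟩
    rw [← hMj]
    rw [div_mul_eq_mul_div, div_le_iff₀ hWpos]
    nlinarith
  -- coercivity of f
  set f : E → ℝ := fun d => ∑ i, c i * Real.exp ⟪v i, d⟫ with hf
  have hf_cont : Continuous f := by
    apply continuous_finset_sum
    intro i _
    exact continuous_const.mul (Real.continuous_exp.comp (Continuous.inner continuous_const continuous_id))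
  have hbound : ∀ d : E, cm * Real.exp (α / W * ‖d‖) ≤ f d := by
    intro d
    obtain ⟨j, hj⟩ := hlb d
    rcases hj with hj | hj
    · calc cm * Real.exp (α / W * ‖d‖) ≤ c j * Real.exp ⟪v j, d⟫ := by
            have h1 : Real.exp (α / W * ‖d‖) ≤ Real.exp ⟪v j, d⟫ := Real.exp_le_exp.2 hj
            have h2 : cm ≤ c j := Finset.inf'_le _ (Finset.mem_univ j)
            nlinarith [Real.exp_pos (α / W * ‖d‖)]
          _ ≤ f d := by
            rw [hf]
            apply Finset.single_le_sum (f := fun i => c i * Real.exp ⟪v i, d⟫) (fun i _ => le_of_lt (mul_pos (hc i) (Real.exp_pos _))) (Finset.mem_univ j)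
    · subst hj
      simp only [norm_zero, mul_zero, Real.exp_zero, mul_one]
      calc cm ≤ c i₀ * Real.exp ⟪v i₀, (0:E)⟫ := by
            simp only [inner_zero_right, Real.exp_zero, mul_one]
            exact Finset.inf'_le _ (Finset.mem_univ i₀)
          _ ≤ f 0 := Finset.single_le_sum (f := fun i => c i * Real.exp ⟪v i, (0:E)⟫) (fun i _ => le_of_lt (mul_pos (hc i) (Real.exp_pos _))) (Finset.mem_univ i₀)
  have htend : Tendsto f (cocompact E) atTop := by
    apply tendsto_atTop_mono hbound
    have h1 : Tendsto (fun t : ℝ => cm * Real.exp (α / W * t)) atTop atTop := by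
      apply Tendsto.const_mul_atTop hcmpos
      apply Real.tendsto_exp_atTop.comp
      exact Tendsto.const_mul_atTop (by positivity) tendsto_id
    exact h1.comp tendsto_norm_cocompact_atTop
  obtain ⟨d₀, hd₀⟩ := hf_cont.exists_forall_le htend
  -- d₀ is a critical point
  have hcrit : ∀ u : E, ∑ i, (c i * Real.exp ⟪v i, d₀⟫) * ⟪v i, u⟫ = 0 := by
    intro u
    set G : ℝ → ℝ := fun t => ∑ i, c i * Real.exp (⟪v i, d₀⟫ + t * ⟪v i, u⟫) with hG
    have hGf : ∀ t, G t = f (d₀ + t • u) := by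
      intro t
      rw [hG, hf]
      apply Finset.sum_congr rfl
      intro i _
      rw [inner_add_right, real_inner_smul_right]
    have hmin : IsLocalMin G 0 := by
      apply Filter.Eventually.of_forall
      intro t
      rw [hGf, hGf]
      simp only [zero_smul, add_zero]
      exact hd₀ _
    have hder : HasDerivAt G (∑ i, c i * Real.exp (⟪v i, d₀⟫ + 0 * ⟪v i, u⟫) * ⟪v i, u⟫) 0 := by
      apply HasDerivAt.fun_sum
      intro i _
      have h1 : HasDerivAt (fun t : ℝ => ⟪v i, d₀⟫ + t * ⟪v i, u⟫) ⟪v i, u⟫ 0 :=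
        (hasDerivAt_mul_const _).const_add _
      have h2 := h1.exp
      have h3 := h2.const_mul (c i)
      exact h3.congr_deriv (by ring)
    have := hmin.hasDerivAt_eq_zero hder
    simp only [zero_mul, add_zero] at this
    simpa [mul_assoc] using this
  have heq : ∑ i, (c i * Real.exp ⟪v i, d₀⟫) • v i = 0 := by
    apply inner_self_eq_zero (𝕜 := ℝ) |>.mp
    rw [inner_sum']
    exact hcrit _
  exact ⟨d₀, heq, fun y hy => uniq y d₀ hy heq⟩

theorem galkin_aux_level {E : Type*} [NormedAddCommGroup E] [InnerProductSpace ℝ E]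
    [FiniteDimensional ℝ E] {n : ℕ} (v : Fin n → E)
    (c : Fin n → ℝ) (hc : ∀ i, 0 < c i)
    (δ : Fin n → ℝ) (hδ : ∀ i, 0 ≤ δ i)
    (htrop : ∀ ε : ℝ, (∃ i, δ i = ε) →
      ∃ w : Fin n → ℝ, (∀ i, (δ i = ε → 0 < w i) ∧ (δ i ≠ ε → w i = 0)) ∧
        (∑ i, w i • v i) ∈ Submodule.span ℝ {x : E | ∃ i, δ i < ε ∧ x = v i}) :
    ∀ (m : ℕ) (ε : ℝ), (Finset.univ.filter (fun i => δ i ≤ ε)).card ≤ m →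
    ∃! d : E, d ∈ Submodule.span ℝ {x : E | ∃ i, δ i ≤ ε ∧ x = v i} ∧
      ∀ η ≤ ε, (∑ i, (if δ i = η then c i * Real.exp ⟪v i, d⟫ else 0) • v i) ∈
        Submodule.span ℝ {x : E | ∃ i, δ i < η ∧ x = v i} := by
  classical
  intro m
  induction m with
  | zero =>
    intro ε hcard
    have hempty : ∀ i, ¬ δ i ≤ ε := by
      intro i hi
      have hmem : i ∈ Finset.univ.filter (fun i => δ i ≤ ε) :=
        Finset.mem_filter.mpr ⟨Finset.mem_univ i, hi⟩
      have := Finset.card_pos.mpr ⟨i, hmem⟩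
      omega
    refine ⟨0, ⟨Submodule.zero_mem _, ?_⟩, ?_⟩
    · intro η hη
      have hno : ∀ i, ¬ (δ i = η) := fun i h => hempty i (h ▸ hη)
      have hz : (∑ i, (if δ i = η then c i * Real.exp ⟪v i, (0:E)⟫ else 0) • v i) = 0 :=
        Finset.sum_eq_zero fun i _ => by rw [if_neg (hno i), zero_smul]
      rw [hz]; exact Submodule.zero_mem _
    · rintro y ⟨hyW, -⟩
      have hsetempty : {x : E | ∃ i, δ i ≤ ε ∧ x = v i} = ∅ := by
        ext x
        simp only [Set.mem_setOf_eq, Set.mem_empty_iff_false, iff_false, not_exists]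
        rintro i ⟨hi, -⟩; exact hempty i hi
      rw [hsetempty, Submodule.span_empty, Submodule.mem_bot] at hyW
      exact hyW
  | succ m IH =>
    intro ε hcard
    by_cases hnum : (Finset.univ.filter (fun i => δ i ≤ ε)).card ≤ m
    · exact IH ε hnum
    have hs : (Finset.univ.filter (fun i => δ i ≤ ε)).Nonempty := by
      rw [Finset.nonempty_iff_ne_empty]
      intro h
      rw [h] at hnum
      simp at hnum
    set s := Finset.univ.filter (fun i => δ i ≤ ε) with hsdef
    set ε₀ := s.sup' hs δ with hε₀def
    obtain ⟨istar, histar, histareq⟩ := Finset.exists_mem_eq_sup' hs δ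
    have histarlev : δ istar = ε₀ := histareq.symm
    have hε₀le : ε₀ ≤ ε := Finset.sup'_le _ _ fun i hi => (Finset.mem_filter.mp hi).2
    have hε₀nonneg : (0:ℝ) ≤ ε₀ := le_trans (hδ istar) (le_of_eq histarlev)
    have hεnonneg : (0:ℝ) ≤ ε := le_trans hε₀nonneg hε₀le
    have hle₀ : ∀ i, δ i ≤ ε ↔ δ i ≤ ε₀ := by
      intro i
      constructor
      · intro h
        exact Finset.le_sup' δ (Finset.mem_filter.mpr ⟨Finset.mem_univ i, h⟩)
      · intro h; exact le_trans h hε₀le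
    set s' := Finset.univ.filter (fun i => δ i < ε₀) with hs'def
    set ε' : ℝ := if h : s'.Nonempty then s'.sup' h δ else -1 with hε'def
    have hε'char : ∀ i, δ i ≤ ε' ↔ δ i < ε₀ := by
      intro i
      by_cases h : s'.Nonempty
      · rw [hε'def, dif_pos h]
        constructor
        · intro hi
          obtain ⟨j, hj, hjeq⟩ := Finset.exists_mem_eq_sup' h δ
          have hjlt : δ j < ε₀ := (Finset.mem_filter.mp hj).2
          calc δ i ≤ s'.sup' h δ := hi
            _ = δ j := hjeq
            _ < ε₀ := hjlt
        · intro hi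
          exact Finset.le_sup' δ (Finset.mem_filter.mpr ⟨Finset.mem_univ i, hi⟩)
      · rw [hε'def, dif_neg h]
        constructor
        · intro hi; exact absurd (le_trans (hδ i) hi) (by norm_num)
        · intro hi
          exact absurd ⟨i, Finset.mem_filter.mpr ⟨Finset.mem_univ i, hi⟩⟩ h
    have hε'ε : ε' ≤ ε := by
      by_cases h : s'.Nonempty
      · rw [hε'def, dif_pos h]
        exact Finset.sup'_le _ _ fun i hi =>
          le_trans (le_of_lt (Finset.mem_filter.mp hi).2) hε₀le
      · rw [hε'def, dif_neg h]; linarith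
    have hcard' : (Finset.univ.filter (fun i => δ i ≤ ε')).card ≤ m := by
      have hsub : Finset.univ.filter (fun i => δ i ≤ ε') ⊆ s := by
        intro i hi
        have h1 := (Finset.mem_filter.mp hi).2
        exact Finset.mem_filter.mpr
          ⟨Finset.mem_univ i, le_trans ((hε'char i).mp h1).le hε₀le⟩
      have hstar : istar ∉ Finset.univ.filter (fun i => δ i ≤ ε') := by
        intro h
        have := (hε'char istar).mp (Finset.mem_filter.mp h).2
        rw [histarlev] at this
        exact lt_irrefl _ this
      have hss : Finset.univ.filter (fun i => δ i ≤ ε') ⊂ s :=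
        (Finset.ssubset_iff_of_subset hsub).mpr ⟨istar, histar, hstar⟩
      have := Finset.card_lt_card hss
      omega
    obtain ⟨x, ⟨hxW', hxcond⟩, hxuniq⟩ := IH ε' hcard'
    set K := Submodule.span ℝ {x : E | ∃ i, δ i < ε₀ ∧ x = v i} with hKdef
    have hKW' : Submodule.span ℝ {x : E | ∃ i, δ i ≤ ε' ∧ x = v i} = K := by
      rw [hKdef]
      congr 1
      ext x
      simp only [Set.mem_setOf_eq]
      constructor
      · rintro ⟨i, hi, rfl⟩; exact ⟨i, (hε'char i).mp hi, rfl⟩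
      · rintro ⟨i, hi, rfl⟩; exact ⟨i, (hε'char i).mpr hi, rfl⟩
    set Wm := Submodule.span ℝ {x : E | ∃ i, δ i ≤ ε ∧ x = v i} with hWmdef
    have hKWm : K ≤ Wm := by
      rw [hKdef, hWmdef]
      apply Submodule.span_mono
      rintro x ⟨i, hi, rfl⟩
      exact ⟨i, le_trans hi.le hε₀le, rfl⟩
    have hxK : x ∈ K := hKW' ▸ hxW'
    set p : Fin n → E := fun i => (K.orthogonalProjectionOnto (v i) : E) with hpdef
    set q : Fin n → E := fun i => v i - p i with hqdef
    have hpK : ∀ i, p i ∈ K := fun i => by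
      rw [hpdef]; exact SetLike.coe_mem _
    have hqKperp : ∀ i, q i ∈ Kᗮ := fun i => by
      rw [hqdef, hpdef]; exact K.sub_starProjection_mem_orthogonal (v i)
    have hvsplit : ∀ i, v i = p i + q i := fun i => by simp [hqdef]
    have hvWm : ∀ i, δ i ≤ ε₀ → v i ∈ Wm := by
      intro i hi
      rw [hWmdef]
      exact Submodule.subset_span ⟨i, (hle₀ i).mpr hi, rfl⟩
    set U := Wm ⊓ Kᗮ with hUdef
    have hqU : ∀ i, δ i ≤ ε₀ → q i ∈ U := by
      intro i hi
      refine Submodule.mem_inf.mpr ⟨?_, hqKperp i⟩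
      have : q i = v i - p i := by rw [hqdef]
      rw [this]
      exact Submodule.sub_mem _ (hvWm i hi) (hKWm (hpK i))
    set V : {i : Fin n // δ i = ε₀} → U := fun i => ⟨q i.1, hqU i.1 (le_of_eq i.2)⟩ with hVdef
    have hVcoe : ∀ i, (V i : E) = q i.1 := fun i => by rw [hVdef]
    -- spanning of U by the V i
    have hSQperp : Submodule.span ℝ {x : E | ∃ i, δ i = ε₀ ∧ x = q i} ≤ Kᗮ :=
      Submodule.span_le.mpr (by rintro x ⟨i, hi, rfl⟩; exact hqKperp i)
    have hspanU : Submodule.span ℝ (Set.range V) = ⊤ := by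
      apply Submodule.map_injective_of_injective U.injective_subtype
      rw [Submodule.map_span, Submodule.map_top, Submodule.range_subtype]
      have himg : U.subtype '' Set.range V = {x : E | ∃ i, δ i = ε₀ ∧ x = q i} := by
        ext x
        simp only [Set.mem_image, Set.mem_range, Set.mem_setOf_eq]
        constructor
        · rintro ⟨u, ⟨i, rfl⟩, rfl⟩
          exact ⟨i.1, i.2, (hVcoe i).symm⟩
        · rintro ⟨i, hi, rfl⟩
          exact ⟨V ⟨i, hi⟩, ⟨⟨i, hi⟩, rfl⟩, hVcoe _⟩
      rw [himg]
      apply le_antisymm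
      · apply Submodule.span_le.mpr
        rintro x ⟨i, hi, rfl⟩
        exact hqU i (le_of_eq hi)
      · intro u hu
        obtain ⟨huWm, huKperp⟩ := Submodule.mem_inf.mp hu
        have hWmle : Wm ≤ K ⊔ Submodule.span ℝ {x : E | ∃ i, δ i = ε₀ ∧ x = q i} := by
          rw [hWmdef]
          apply Submodule.span_le.mpr
          rintro x ⟨i, hi, rfl⟩
          have hi₀ : δ i ≤ ε₀ := (hle₀ i).mp hi
          rcases lt_or_eq_of_le hi₀ with h | h
          · exact Submodule.mem_sup_left (Submodule.subset_span ⟨i, h, rfl⟩)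
          · rw [hvsplit i]
            exact Submodule.add_mem _ (Submodule.mem_sup_left (hpK i))
              (Submodule.mem_sup_right (Submodule.subset_span ⟨i, h, rfl⟩))
        obtain ⟨k, hk, t, ht, hkt⟩ := Submodule.mem_sup.mp (hWmle huWm)
        have hut : u - t ∈ K := by
          have : u - t = k := by rw [← hkt]; abel
          rw [this]; exact hk
        have hut' : u - t ∈ Kᗮ := Submodule.sub_mem _ huKperp (hSQperp ht)
        have h0 : u - t = 0 :=
          (Submodule.disjoint_def.mp (Submodule.orthogonal_disjoint K)) _ hut hut'
        have : u = t := by rwa [sub_eq_zero] at h0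
        rw [this]; exact ht
    -- the positive relation
    obtain ⟨w, hw1, hw2⟩ := htrop ε₀ ⟨istar, histarlev⟩
    rw [← hKdef] at hw2
    set w' : {i : Fin n // δ i = ε₀} → ℝ := fun i => w i.1 with hw'def
    have hw'pos : ∀ i, 0 < w' i := fun i => (hw1 i.1).1 i.2
    have hsubsum : ∀ (g : Fin n → E), (∑ i : {i : Fin n // δ i = ε₀}, w i.1 • g i.1) = ∑ i, w i • g i := by
      intro g
      have h1 : ∑ i ∈ Finset.univ.filter (fun i => δ i = ε₀), w i • g i
          = ∑ i : {i : Fin n // δ i = ε₀}, w i.1 • g i.1 :=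
        Finset.sum_subtype _ (by simp) (fun i => w i • g i)
      rw [← h1]
      apply Finset.sum_subset (Finset.filter_subset _ _)
      intro i _ hi
      have : w i = 0 := (hw1 i).2 (by simpa using hi)
      rw [this, zero_smul]
    have hifsum : ∀ (a : Fin n → ℝ),
        (∑ i, (if δ i = ε₀ then a i else 0) • v i)
          = ∑ i : {i : Fin n // δ i = ε₀}, a i.1 • v i.1 := by
      intro a
      have h1 : ∑ i ∈ Finset.univ.filter (fun i => δ i = ε₀), a i • v i
          = ∑ i : {i : Fin n // δ i = ε₀}, a i.1 • v i.1 :=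
        Finset.sum_subtype _ (by simp) (fun i => a i • v i)
      rw [← h1, Finset.sum_filter]
      apply Finset.sum_congr rfl
      intro i _
      by_cases h : δ i = ε₀
      · rw [if_pos h, if_pos h]
      · rw [if_neg h, if_neg h, zero_smul]
    have hrelU : ∑ i, w' i • V i = 0 := by
      have hcoe : ((∑ i, w' i • V i : U) : E) = ∑ i : {i : Fin n // δ i = ε₀}, w i.1 • q i.1 := by
        rw [Submodule.coe_sum]
        exact Finset.sum_congr rfl fun i _ => by rw [Submodule.coe_smul, hVcoe, hw'def]
      have hq0 : (∑ i : {i : Fin n // δ i = ε₀}, w i.1 • q i.1) = 0 := by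
        have hsplit : (∑ i : {i : Fin n // δ i = ε₀}, w i.1 • q i.1)
            = (∑ i, w i • v i) - ∑ i : {i : Fin n // δ i = ε₀}, w i.1 • p i.1 := by
          rw [← hsubsum v, ← Finset.sum_sub_distrib]
          exact Finset.sum_congr rfl fun i _ => by
            rw [hvsplit i.1, smul_add]; abel
        have hK1 : (∑ i : {i : Fin n // δ i = ε₀}, w i.1 • q i.1) ∈ K := by
          rw [hsplit]
          exact Submodule.sub_mem _ hw2
            (Submodule.sum_mem _ fun i _ => Submodule.smul_mem _ _ (hpK i.1))
        have hK2 : (∑ i : {i : Fin n // δ i = ε₀}, w i.1 • q i.1) ∈ Kᗮ :=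
          Submodule.sum_mem _ fun i _ => Submodule.smul_mem _ _ (hqKperp i.1)
        exact (Submodule.disjoint_def.mp (Submodule.orthogonal_disjoint K)) _ hK1 hK2
      have : ((∑ i, w' i • V i : U) : E) = 0 := hcoe.trans hq0
      exact_mod_cast this
    set c' : {i : Fin n // δ i = ε₀} → ℝ := fun i => c i.1 * Real.exp ⟪v i.1, x⟫ with hc'def
    have hc'pos : ∀ i, 0 < c' i := fun i => mul_pos (hc i.1) (Real.exp_pos _)
    obtain ⟨z, hz, hzuniq⟩ := galkin_lemma V hspanU c' hc'pos w' hw'pos hrelU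
    have hzperpK : ∀ (zz : U) (e : E), e ∈ K → ⟪e, (zz : E)⟫ = 0 := fun zz e he =>
      Submodule.inner_right_of_mem_orthogonal he (Submodule.mem_inf.mp zz.2).2
    have hinner_level : ∀ (i : {i : Fin n // δ i = ε₀}) (zz : U),
        ⟪v i.1, x + (zz : E)⟫ = ⟪v i.1, x⟫ + ⟪q i.1, (zz : E)⟫ := by
      intro i zz
      rw [inner_add_right]
      congr 1
      conv_lhs => rw [hvsplit i.1]
      rw [inner_add_left, hzperpK zz (p i.1) (hpK i.1), zero_add]
    have hmain : ∀ zz : U,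
        (∑ i, (if δ i = ε₀ then c i * Real.exp ⟪v i, x + (zz : E)⟫ else 0) • v i)
          = (∑ i : {i : Fin n // δ i = ε₀}, (c' i * Real.exp ⟪q i.1, (zz : E)⟫) • p i.1)
            + ↑(∑ i : {i : Fin n // δ i = ε₀}, (c' i * Real.exp ⟪V i, zz⟫) • V i) := by
      intro zz
      rw [hifsum]
      have hcoe2 : ((∑ i : {i : Fin n // δ i = ε₀}, (c' i * Real.exp ⟪V i, zz⟫) • V i : U) : E)
          = ∑ i : {i : Fin n // δ i = ε₀}, (c' i * Real.exp ⟪q i.1, (zz : E)⟫) • q i.1 := by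
        rw [Submodule.coe_sum]
        refine Finset.sum_congr rfl fun i _ => ?_
        rw [Submodule.coe_smul, hVcoe, Submodule.coe_inner, hVcoe]
      rw [hcoe2, ← Finset.sum_add_distrib]
      refine Finset.sum_congr rfl fun i _ => ?_
      rw [hinner_level i zz, Real.exp_add]
      have hco : c i.1 * (Real.exp ⟪v i.1, x⟫ * Real.exp ⟪q i.1, (zz : E)⟫)
          = c' i * Real.exp ⟪q i.1, (zz : E)⟫ := by rw [hc'def]; ring
      rw [hco]
      conv_lhs => rw [hvsplit i.1]
      rw [smul_add]
    refine ⟨x + (z : E), ⟨?_, ?_⟩, ?_⟩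
    · exact Submodule.add_mem _ (hKWm hxK) (Submodule.mem_inf.mp z.2).1
    · intro η hη
      by_cases hlev : ∃ j, δ j = η
      · obtain ⟨j, hj⟩ := hlev
        have hjε₀ : δ j ≤ ε₀ := (hle₀ j).mp (hj.le.trans hη)
        rcases lt_or_eq_of_le hjε₀ with hlt | heq
        · have hη' : η ≤ ε' := by
            rw [← hj]; exact (hε'char j).mpr hlt
          have hsame : (∑ i, (if δ i = η then c i * Real.exp ⟪v i, x + (z : E)⟫ else 0) • v i)
              = ∑ i, (if δ i = η then c i * Real.exp ⟪v i, x⟫ else 0) • v i := by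
            refine Finset.sum_congr rfl fun i _ => ?_
            by_cases h : δ i = η
            · have hviK : v i ∈ K := by
                rw [hKdef]
                exact Submodule.subset_span ⟨i, by rw [h, ← hj]; exact hlt, rfl⟩
              rw [if_pos h, if_pos h, inner_add_right, hzperpK z (v i) hviK, add_zero]
            · rw [if_neg h, if_neg h]
          rw [hsame]
          exact hxcond η hη'
        · have hηε₀ : η = ε₀ := by rw [← hj, heq]
          subst hηε₀
          rw [hmain z, hz]
          rw [← hKdef]
          simpa using Submodule.sum_mem K fun (i : {i : Fin n // δ i = ε₀}) _ =>
            Submodule.smul_mem K _ (hpK i.1)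
      · have hzero : (∑ i, (if δ i = η then c i * Real.exp ⟪v i, x + (z : E)⟫ else 0) • v i) = 0 :=
          Finset.sum_eq_zero fun i _ => by rw [if_neg (fun h => hlev ⟨i, h⟩), zero_smul]
        rw [hzero]; exact Submodule.zero_mem _
    · rintro y ⟨hyW, hycond⟩
      have hx'K : (K.orthogonalProjectionOnto y : E) ∈ K := SetLike.coe_mem _
      set x' : E := (K.orthogonalProjectionOnto y : E) with hx'def
      set z'' : E := y - x' with hz''def
      have hz''Kperp : z'' ∈ Kᗮ := by
        rw [hz''def, hx'def]; exact K.sub_starProjection_mem_orthogonal y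
      have hz''U : z'' ∈ U := by
        refine Submodule.mem_inf.mpr ⟨?_, hz''Kperp⟩
        have : z'' = y - x' := by rw [hz''def]
        rw [this]
        exact Submodule.sub_mem _ hyW (hKWm hx'K)
      have hysplit : y = x' + z'' := by rw [hz''def]; abel
      have hx'eq : x' = x := by
        apply hxuniq
        refine ⟨by rw [hKW']; exact hx'K, ?_⟩
        intro η hη
        have hsum : (∑ i, (if δ i = η then c i * Real.exp ⟪v i, x'⟫ else 0) • v i)
            = ∑ i, (if δ i = η then c i * Real.exp ⟪v i, y⟫ else 0) • v i := by
          refine Finset.sum_congr rfl fun i _ => ?_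
          by_cases h : δ i = η
          · have hviK : v i ∈ K := by
              rw [hKdef]
              exact Submodule.subset_span ⟨i, (hε'char i).mp (h.le.trans hη), rfl⟩
            have : ⟪v i, y⟫ = ⟪v i, x'⟫ := by
              rw [hysplit, inner_add_right,
                Submodule.inner_right_of_mem_orthogonal hviK hz''Kperp, add_zero]
            rw [if_pos h, if_pos h, this]
          · rw [if_neg h, if_neg h]
        rw [hsum]
        exact hycond η (le_trans hη hε'ε)
      set zU : U := ⟨z'', hz''U⟩ with hzUdef
      have hzUcoe : (zU : E) = z'' := by rw [hzUdef]
      have hyx : y = x + (zU : E) := by rw [hzUcoe, hysplit, hx'eq]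
      have hcond₀ := hycond ε₀ hε₀le
      rw [hyx, hmain zU, ← hKdef] at hcond₀
      have hA : (∑ i : {i : Fin n // δ i = ε₀}, (c' i * Real.exp ⟪q i.1, (zU : E)⟫) • p i.1) ∈ K :=
        Submodule.sum_mem _ fun i _ => Submodule.smul_mem _ _ (hpK i.1)
      have hSK : (↑(∑ i : {i : Fin n // δ i = ε₀}, (c' i * Real.exp ⟪V i, zU⟫) • V i) : E) ∈ K := by
        have := Submodule.sub_mem _ hcond₀ hA
        simpa using this
      have hSperp : (↑(∑ i : {i : Fin n // δ i = ε₀}, (c' i * Real.exp ⟪V i, zU⟫) • V i) : E) ∈ Kᗮ :=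
        (Submodule.mem_inf.mp ((SetLike.coe_mem
          (∑ i : {i : Fin n // δ i = ε₀}, (c' i * Real.exp ⟪V i, zU⟫) • V i)))).2
      have hS0 : (∑ i : {i : Fin n // δ i = ε₀}, (c' i * Real.exp ⟪V i, zU⟫) • V i) = 0 := by
        have h0 : (↑(∑ i : {i : Fin n // δ i = ε₀}, (c' i * Real.exp ⟪V i, zU⟫) • V i) : E) = 0 :=
          (Submodule.disjoint_def.mp (Submodule.orthogonal_disjoint K)) _ hSK hSperp
        exact_mod_cast h0
      rw [hyx, hzuniq zU hS0]

/-- Proposition 4.21 (p:coefficient): existence and uniqueness of the critical coefficient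
`d_coeff`, given the tropical critical conditions (0 in the relative interior of the quotient
convex hull at each level `ε`). -/
theorem stmt_9 (r n : ℕ) (v : Fin n → (Fin r → ℝ))
    (hspan : Submodule.span ℝ (Set.range v) = ⊤)
    (c : Fin n → ℝ) (hc : ∀ i, 0 < c i)
    (δ : Fin n → ℝ) (hδ : ∀ i, 0 ≤ δ i)
    (B : ℝ → Submodule ℝ (Fin r → ℝ))
    (hB : ∀ ε : ℝ, B ε = Submodule.span ℝ {w : Fin r → ℝ | ∃ i, δ i < ε ∧ w = v i})
    (htrop : ∀ ε : ℝ, 0 ≤ ε →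
      ((∀ i, δ i ≠ ε) ∨
        ∃ w : Fin n → ℝ, (∀ i, (δ i = ε → 0 < w i) ∧ (δ i ≠ ε → w i = 0)) ∧
          (∑ i, w i) = 1 ∧
          (∑ i, w i • (Submodule.Quotient.mk (v i) : (Fin r → ℝ) ⧸ B ε)) = 0)) :
    ∃! d : Fin r → ℝ, ∀ ε : ℝ, 0 ≤ ε →
      (∑ i, (if δ i = ε then c i * Real.exp (∑ j, v i j * d j) else 0) • v i) ∈ B ε := by
  classical
  set L : EuclideanSpace ℝ (Fin r) ≃ₗ[ℝ] (Fin r → ℝ) := WithLp.linearEquiv 2 ℝ (Fin r → ℝ)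
    with hLdef
  set v' : Fin n → EuclideanSpace ℝ (Fin r) := fun i => L.symm (v i) with hv'def
  have hLv' : ∀ i, L (v' i) = v i := fun i => by rw [hv'def]; exact L.apply_symm_apply _
  have hmem : ∀ (s : Set (Fin r → ℝ)) (y : EuclideanSpace ℝ (Fin r)),
      L y ∈ Submodule.span ℝ s ↔ y ∈ Submodule.span ℝ (⇑L.symm '' s) := by
    intro s y
    rw [Submodule.span_image_linearEquiv]
    constructor
    · intro h
      exact Submodule.mem_map.mpr ⟨L y, h, by simp⟩
    · intro h
      obtain ⟨a, ha, haa⟩ := Submodule.mem_map.mp h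
      have : a = L y := by rw [← haa]; simp
      rwa [this] at ha
  have hset : ∀ (P : Fin n → Prop), (⇑L.symm '' {x : Fin r → ℝ | ∃ i, P i ∧ x = v i})
      = {x : EuclideanSpace ℝ (Fin r) | ∃ i, P i ∧ x = v' i} := by
    intro P
    ext x
    simp only [Set.mem_image, Set.mem_setOf_eq]
    constructor
    · rintro ⟨a, ⟨i, hi, rfl⟩, rfl⟩
      exact ⟨i, hi, by rw [hv'def]⟩
    · rintro ⟨i, hi, rfl⟩
      exact ⟨v i, ⟨i, hi, rfl⟩, by rw [hv'def]⟩
  have hLsum : ∀ (a : Fin n → ℝ), L (∑ i, a i • v' i) = ∑ i, a i • v i := by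
    intro a
    rw [map_sum]
    exact Finset.sum_congr rfl fun i _ => by rw [map_smul, hLv']
  have hip : ∀ (i : Fin n) (dE : EuclideanSpace ℝ (Fin r)),
      ⟪v' i, dE⟫ = ∑ j, v i j * (L dE) j := by
    intro i dE
    rw [PiLp.inner_apply]
    exact Finset.sum_congr rfl fun j _ => by
      rw [RCLike.inner_apply, starRingEnd_apply, star_trivial]
      exact mul_comm _ _
  have hcond : ∀ (η : ℝ) (dE : EuclideanSpace ℝ (Fin r)),
      ((∑ i, (if δ i = η then c i * Real.exp ⟪v' i, dE⟫ else 0) • v' i)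
        ∈ Submodule.span ℝ {x : EuclideanSpace ℝ (Fin r) | ∃ i, δ i < η ∧ x = v' i})
      ↔ ((∑ i, (if δ i = η then c i * Real.exp (∑ j, v i j * (L dE) j) else 0) • v i) ∈ B η) := by
    intro η dE
    rw [hB η]
    have hLS : L (∑ i, (if δ i = η then c i * Real.exp ⟪v' i, dE⟫ else 0) • v' i)
        = ∑ i, (if δ i = η then c i * Real.exp (∑ j, v i j * (L dE) j) else 0) • v i := by
      rw [hLsum]
      refine Finset.sum_congr rfl fun i _ => ?_
      by_cases h : δ i = η
      · rw [if_pos h, if_pos h, hip]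
      · rw [if_neg h, if_neg h]
    constructor
    · intro h
      have h2 := (hmem {x : Fin r → ℝ | ∃ i, δ i < η ∧ x = v i} _).mpr
        (by rwa [hset (fun i => δ i < η)])
      rwa [hLS] at h2
    · intro h
      have h2 : L (∑ i, (if δ i = η then c i * Real.exp ⟪v' i, dE⟫ else 0) • v' i)
          ∈ Submodule.span ℝ {x : Fin r → ℝ | ∃ i, δ i < η ∧ x = v i} := by rwa [hLS]
      have h3 := (hmem _ _).mp h2
      rwa [hset (fun i => δ i < η)] at h3
  have htropE : ∀ ε : ℝ, (∃ i, δ i = ε) →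
      ∃ w : Fin n → ℝ, (∀ i, (δ i = ε → 0 < w i) ∧ (δ i ≠ ε → w i = 0)) ∧
        (∑ i, w i • v' i) ∈ Submodule.span ℝ
          {x : EuclideanSpace ℝ (Fin r) | ∃ i, δ i < ε ∧ x = v' i} := by
    intro ε hex
    obtain ⟨i₀, hi₀⟩ := hex
    have hεnn : (0:ℝ) ≤ ε := hi₀ ▸ hδ i₀
    rcases htrop ε hεnn with h | ⟨w, hw1, _, hw3⟩
    · exact absurd hi₀ (h i₀)
    refine ⟨w, hw1, ?_⟩
    have hmk : (Submodule.Quotient.mk (∑ i, w i • v i) : (Fin r → ℝ) ⧸ B ε)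
        = ∑ i, w i • (Submodule.Quotient.mk (v i) : (Fin r → ℝ) ⧸ B ε) := by
      rw [← Submodule.mkQ_apply, map_sum]
      exact Finset.sum_congr rfl fun i _ => by rw [map_smul, Submodule.mkQ_apply]
    have hq : (∑ i, w i • v i) ∈ B ε := by
      rw [← Submodule.Quotient.mk_eq_zero (B ε), hmk, hw3]
    rw [hB ε] at hq
    have h2 : L (∑ i, w i • v' i) ∈ Submodule.span ℝ
        {x : Fin r → ℝ | ∃ i, δ i < ε ∧ x = v i} := by rwa [hLsum]
    have h3 := (hmem _ _).mp h2
    rwa [hset (fun i => δ i < ε)] at h3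
  set εmax : ℝ := ∑ i, δ i with hεmaxdef
  have hδmax : ∀ i, δ i ≤ εmax := fun i =>
    Finset.single_le_sum (fun j _ => hδ j) (Finset.mem_univ i)
  have hcardn : (Finset.univ.filter (fun i => δ i ≤ εmax)).card ≤ n := by
    have := Finset.card_filter_le (Finset.univ : Finset (Fin n)) (fun i => δ i ≤ εmax)
    simpa using this
  obtain ⟨dE, ⟨-, hdcond⟩, hduniq⟩ := galkin_aux_level v' c hc δ hδ htropE n εmax hcardn
  have hWtop : Submodule.span ℝ
      {x : EuclideanSpace ℝ (Fin r) | ∃ i, δ i ≤ εmax ∧ x = v' i} = ⊤ := by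
    rw [eq_top_iff]
    intro y _
    have h1 : L y ∈ Submodule.span ℝ (Set.range v) := by rw [hspan]; trivial
    have h2 : Set.range v = {x : Fin r → ℝ | ∃ i, δ i ≤ εmax ∧ x = v i} := by
      ext x
      simp only [Set.mem_range, Set.mem_setOf_eq]
      constructor
      · rintro ⟨i, rfl⟩; exact ⟨i, hδmax i, rfl⟩
      · rintro ⟨i, _, rfl⟩; exact ⟨i, rfl⟩
    rw [h2] at h1
    have h3 := (hmem _ _).mp h1
    rwa [hset (fun i => δ i ≤ εmax)] at h3
  refine ⟨L dE, ?_, ?_⟩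
  · intro ε hε
    by_cases hle : ε ≤ εmax
    · exact (hcond ε dE).mp (hdcond ε hle)
    · have hno : ∀ i, δ i ≠ ε := fun i h => hle (h ▸ hδmax i)
      have hzero : (∑ i, (if δ i = ε then c i * Real.exp (∑ j, v i j * (L dE) j) else 0) • v i)
          = 0 := Finset.sum_eq_zero fun i _ => by rw [if_neg (hno i), zero_smul]
      rw [hzero]; exact Submodule.zero_mem _
  · intro d₂ hd₂
    have hLL : L (L.symm d₂) = d₂ := L.apply_symm_apply d₂
    have hd₂E : L.symm d₂ = dE := by
      apply hduniq
      refine ⟨by rw [hWtop]; trivial, ?_⟩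
      intro η hη
      by_cases h0 : (0:ℝ) ≤ η
      · have hη2 := hd₂ η h0
        apply (hcond η (L.symm d₂)).mpr
        rwa [hLL]
      · have hno : ∀ i, ¬ δ i = η := fun i h => h0 (h ▸ hδ i)
        have hzero : (∑ i, (if δ i = η then c i * Real.exp ⟪v' i, L.symm d₂⟫ else 0) • v' i)
            = 0 := Finset.sum_eq_zero fun i _ => by rw [if_neg (hno i), zero_smul]
        rw [hzero]; exact Submodule.zero_mem _
    rw [← hd₂E, hLL]
end

section
/- Let v_1,...,v_n ∈ ℝ^r, c_1,...,c_n > 0, and δ_1,...,δ_n ∈ ℝ_{≥0}, with B_{<ε} := span {v_i : δ_i < ε} and B_{≤ε} := span {v_i : δ_i ≤ ε}. Assume the bilinear form B_h on B_{<ε}^⊥ given by (u_1, u_2) ↦ Σ_{i : δ_i = ε} c_i ⟨v_i, u_1⟩ ⟨v_i, u_2⟩ induces a positive definite (hence nondegenerate) form on B_{<ε}^⊥ / B_{≤ε}^⊥ for every ε. If w ∈ ℝ^r satisfies, for all ε ≥ 0, Σ_{i : δ_i = ε} c_i ⟨v_i, w⟩ v_i ∈ B_{<ε}, then w = 0. 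-/
open scoped Classical

/-- Lemma 4.30 (l:wvanishing): the kernel-vanishing lemma. If the induced forms on
`B_{<ε}^⊥ / B_{≤ε}^⊥` are positive definite and `w` satisfies all the level conditions,
then `w = 0`. -/
theorem stmt_10 (r n : ℕ) (v : Fin n → (Fin r → ℝ))
    (hspan : Submodule.span ℝ (Set.range v) = ⊤)
    (c : Fin n → ℝ) (hc : ∀ i, 0 < c i)
    (δ : Fin n → ℝ) (hδ : ∀ i, 0 ≤ δ i)
    (hposdef : ∀ ε : ℝ, 0 ≤ ε → ∀ u : Fin r → ℝ,
      (∀ i, δ i < ε → (∑ j, v i j * u j) = 0) →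
      (∑ i, if δ i = ε then c i * (∑ j, v i j * u j) * (∑ j, v i j * u j) else 0) = 0 →
      ∀ i, δ i ≤ ε → (∑ j, v i j * u j) = 0)
    (w : Fin r → ℝ)
    (hw : ∀ ε : ℝ, 0 ≤ ε →
      (∑ i, (if δ i = ε then c i * (∑ j, v i j * w j) else 0) • v i) ∈
        Submodule.span ℝ {x : Fin r → ℝ | ∃ i, δ i < ε ∧ x = v i}) :
    w = 0 := by
  -- the linear functional x ↦ ⟨x, w⟩
  set f : (Fin r → ℝ) →ₗ[ℝ] ℝ :=
    { toFun := fun x => ∑ k, x k * w k,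
      map_add' := by intro a b; simp [add_mul, Finset.sum_add_distrib],
      map_smul' := by intro m a; simp [Finset.mul_sum, mul_assoc] } with hf
  -- the level step
  have step : ∀ ε : ℝ, 0 ≤ ε → (∀ j, δ j < ε → (∑ k, v j k * w k) = 0) →
      ∀ i, δ i ≤ ε → (∑ k, v i k * w k) = 0 := by
    intro ε hε H
    apply hposdef ε hε w H
    have hm := hw ε hε
    have hker : Submodule.span ℝ {x : Fin r → ℝ | ∃ i, δ i < ε ∧ x = v i} ≤
        LinearMap.ker f := by
      rw [Submodule.span_le]
      rintro x ⟨i, hi, rfl⟩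
      simpa [hf] using H i hi
    have h0 : f (∑ i, (if δ i = ε then c i * (∑ j, v i j * w j) else 0) • v i) = 0 :=
      hker hm
    rw [map_sum] at h0
    simp only [map_smul, smul_eq_mul] at h0
    have heq : (∑ i, if δ i = ε then c i * (∑ j, v i j * w j) * (∑ j, v i j * w j) else 0)
        = ∑ x, (if δ x = ε then c x * (∑ j, v x j * w j) else 0) * f (v x) := by
      apply Finset.sum_congr rfl
      intro i _
      by_cases h : δ i = ε <;> simp [h, hf, mul_assoc]
    rw [heq]
    exact h0
  -- strong induction: all inner products vanish
  have key : ∀ N : ℕ, ∀ i, (Finset.univ.filter (fun j => δ j < δ i)).card ≤ N →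
      (∑ k, v i k * w k) = 0 := by
    intro N
    induction N with
    | zero =>
      intro i hi
      apply step (δ i) (hδ i) _ i le_rfl
      intro j hj
      exfalso
      have : j ∈ Finset.univ.filter (fun j => δ j < δ i) := by simp [hj]
      have := Finset.card_pos.mpr ⟨j, this⟩
      omega
    | succ N ih =>
      intro i hi
      apply step (δ i) (hδ i) _ i le_rfl
      intro j hj
      apply ih j
      have hsub : Finset.univ.filter (fun k => δ k < δ j) ⊂
          Finset.univ.filter (fun k => δ k < δ i) := by
        constructor
        · intro k hk
          simp only [Finset.mem_filter, Finset.mem_univ, true_and] at hk ⊢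
          exact hk.trans hj
        · intro hc'
          have : j ∈ Finset.univ.filter (fun k => δ k < δ j) := by
            apply hc'; simp [hj]
          simp at this
      have := Finset.card_lt_card hsub
      omega
  have hall : ∀ i, (∑ k, v i k * w k) = 0 := fun i => key _ i le_rfl
  -- conclude w = 0
  have hker2 : Submodule.span ℝ (Set.range v) ≤ LinearMap.ker f := by
    rw [Submodule.span_le]
    rintro x ⟨i, rfl⟩
    simpa [hf] using hall i
  rw [hspan] at hker2
  have hw0 : f w = 0 := hker2 (Submodule.mem_top)
  have : ∑ k, w k * w k = 0 := hw0
  funext k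
  have hk : w k * w k = 0 := by
    have hnn : ∀ j ∈ Finset.univ, (0:ℝ) ≤ w j * w j := fun j _ => mul_self_nonneg _
    exact (Finset.sum_eq_zero_iff_of_nonneg hnn).mp this k (Finset.mem_univ k)
  have := mul_self_eq_zero.mp hk
  simpa using this
end

section
/- Let v_1,...,v_n ∈ ℝ^r with 0 in the interior of their convex hull, c_1,...,c_n ∈ ℝ, τ = min { c : (c,0) ∈ convexHull {(c_i,v_i)} }, and F the minimal face of convexHull {(c_i,v_i)} containing (τ, 0). For d ∈ ℝ^r define δ_i(d) = c_i + ⟨v_i,d⟩ − min_j (c_j + ⟨v_j,d⟩). Then the following are equivalent: (1) 0 lies in the relative interior of convexHull { v_i : δ_i(d) = 0 }; (2) the lowest face of convexHull {(c_i,v_i)} with respect to (1,d) equals F. -/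
open Finset

section aux

variable {E : Type*} [NormedAddCommGroup E] [NormedSpace ℝ E]

/-- Membership in the convex hull of a finite family, via weights. -/
lemma auxMemHullIff {n : ℕ} (p : Fin n → E) (x : E) :
    x ∈ convexHull ℝ (Set.range p) ↔
      ∃ w : Fin n → ℝ, (∀ i, 0 ≤ w i) ∧ ∑ i, w i = 1 ∧ ∑ i, w i • p i = x := by
  rw [convexHull_range_eq_exists_affineCombination]
  constructor
  · rintro ⟨s, w, hw0, hw1, rfl⟩
    refine ⟨fun i => if i ∈ s then w i else 0, fun i => ?_, ?_, ?_⟩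
    · by_cases h : i ∈ s
      · simp [h, hw0 i h]
      · simp [h]
    · rw [Finset.sum_ite_mem, Finset.univ_inter, hw1]
    · rw [affineCombination_eq_linear_combination s p w hw1]
      simp only [ite_smul, zero_smul]
      rw [Finset.sum_ite_mem, Finset.univ_inter]
  · rintro ⟨w, hw0, hw1, rfl⟩
    exact ⟨Finset.univ, w, fun i _ => hw0 i, hw1,
      affineCombination_eq_linear_combination _ _ _ hw1⟩

end aux

section cone

variable {E : Type*} [NormedAddCommGroup E] [NormedSpace ℝ E]

lemma auxSumSubtype {α : Type*} {M : Type*} [AddCommMonoid M] [Fintype α]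
    (t : Finset α) (f : α → M) (hf : ∀ i ∉ t, f i = 0) : ∑ i : ↥t, f ↑i = ∑ i, f i := by
  rw [Finset.univ_eq_attach, Finset.sum_attach t f]
  exact Finset.sum_subset (Finset.subset_univ t) (fun i _ hi => hf i hi)

/-- The convex cone generated by finitely many vectors. -/
def auxCone {n : ℕ} (p : Fin n → E) : Set E :=
  {x | ∃ l : Fin n → ℝ, (∀ i, 0 ≤ l i) ∧ ∑ i, l i • p i = x}

lemma auxCone_zero_mem {n : ℕ} (p : Fin n → E) : (0 : E) ∈ auxCone p :=
  ⟨fun _ => 0, fun _ => le_refl _, by simp⟩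

lemma auxCone_gen_mem {n : ℕ} (p : Fin n → E) (i : Fin n) : p i ∈ auxCone p := by
  refine ⟨fun j => if j = i then 1 else 0, fun j => by positivity, ?_⟩
  simp [ite_smul]

lemma auxCone_smul_mem {n : ℕ} (p : Fin n → E) {x : E} (hx : x ∈ auxCone p) {s : ℝ}
    (hs : 0 ≤ s) : s • x ∈ auxCone p := by
  obtain ⟨l, hl0, hl⟩ := hx
  exact ⟨fun i => s * l i, fun i => mul_nonneg hs (hl0 i),
    by simp only [mul_smul, ← Finset.smul_sum, hl]⟩

lemma auxCone_convex {n : ℕ} (p : Fin n → E) : Convex ℝ (auxCone p) := by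
  rintro x ⟨l, hl0, hl⟩ y ⟨m, hm0, hm⟩ a b ha hb _
  refine ⟨fun i => a * l i + b * m i,
    fun i => add_nonneg (mul_nonneg ha (hl0 i)) (mul_nonneg hb (hm0 i)), ?_⟩
  simp only [add_smul, mul_smul, Finset.sum_add_distrib, ← Finset.smul_sum, hl, hm]

lemma auxCone_caratheodory {n : ℕ} (p : Fin n → E) :
    ∀ N (l : Fin n → ℝ), (Finset.univ.filter (fun i => l i ≠ 0)).card ≤ N → (∀ i, 0 ≤ l i) →
    ∃ t : Finset (Fin n), LinearIndependent ℝ (fun i : t => p i) ∧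
      ∃ l' : Fin n → ℝ, (∀ i, 0 ≤ l' i) ∧ (∀ i ∉ t, l' i = 0) ∧
        ∑ i, l' i • p i = ∑ i, l i • p i := by
  intro N
  induction N with
  | zero =>
    intro l hcard hl
    have hs : Finset.univ.filter (fun i => l i ≠ 0) = ∅ :=
      Finset.card_eq_zero.1 (Nat.le_zero.1 hcard)
    have hl0 : ∀ i, l i = 0 := by
      intro i
      by_contra h
      have : i ∈ Finset.univ.filter (fun i => l i ≠ 0) :=
        Finset.mem_filter.2 ⟨Finset.mem_univ _, h⟩
      simp [hs] at this
    haveI : IsEmpty ↥(∅ : Finset (Fin n)) := Finset.isEmpty_coe_sort.2 rfl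
    exact ⟨∅, linearIndependent_empty_type, l, hl, fun i _ => hl0 i, rfl⟩
  | succ N ih =>
    intro l hcard hl
    set s := Finset.univ.filter (fun i => l i ≠ 0) with hs
    by_cases hind : LinearIndependent ℝ (fun i : s => p i)
    · exact ⟨s, hind, l, hl,
        fun i hi => not_not.1 (fun h => hi (Finset.mem_filter.2 ⟨Finset.mem_univ _, h⟩)), rfl⟩
    rw [Fintype.not_linearIndependent_iff] at hind
    obtain ⟨g, hg0, i₀, hgi₀⟩ := hind
    -- extend g to a relation `a` supported in s, with a positive coordinate
    have key : ∃ b : Fin n → ℝ, (∑ i, b i • p i = 0) ∧ (∀ i, b i ≠ 0 → l i ≠ 0) ∧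
        ∃ j, 0 < b j := by
      set a : Fin n → ℝ := fun i => if h : i ∈ s then g ⟨i, h⟩ else 0 with ha
      have hasum : ∑ i, a i • p i = 0 := by
        rw [← auxSumSubtype s (fun i => a i • p i)
          (fun i hi => by simp [ha, dif_neg hi]), ← hg0]
        exact Finset.sum_congr rfl (fun i _ => by simp [ha, i.2])
      have hasupp : ∀ i, a i ≠ 0 → l i ≠ 0 := by
        intro i hai
        by_contra h
        have : i ∉ s := by simp [hs, h]
        simp [ha, dif_neg this] at hai
      have hai₀ : a ↑i₀ ≠ 0 := by
        simpa [ha, dif_pos i₀.2] using hgi₀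
      rcases lt_or_gt_of_ne hai₀ with hneg | hpos
      · refine ⟨-a, by simp only [Pi.neg_apply, neg_smul, Finset.sum_neg_distrib, hasum,
          neg_zero], ?_, ⟨i₀, by simpa⟩⟩
        intro i hi
        exact hasupp i (by simpa using hi)
      · exact ⟨a, hasum, hasupp, i₀, hpos⟩
    obtain ⟨b, hbsum, hbsupp, j₀, hbj₀⟩ := key
    set P := Finset.univ.filter (fun i => 0 < b i) with hP
    have hPne : P.Nonempty := ⟨j₀, Finset.mem_filter.2 ⟨Finset.mem_univ _, hbj₀⟩⟩
    set t₀ := P.inf' hPne (fun i => l i / b i) with ht₀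
    have hlpos : ∀ i ∈ P, 0 < l i := by
      intro i hi
      have hbi : 0 < b i := (Finset.mem_filter.1 hi).2
      exact lt_of_le_of_ne (hl i) (Ne.symm (hbsupp i (ne_of_gt hbi)))
    have ht₀pos : 0 < t₀ := by
      rw [ht₀, Finset.lt_inf'_iff]
      intro i hi
      exact div_pos (hlpos i hi) (Finset.mem_filter.1 hi).2
    obtain ⟨iστ, hiστP, hiστ⟩ := Finset.exists_mem_eq_inf' hPne (fun i => l i / b i)
    set l' : Fin n → ℝ := fun i => l i - t₀ * b i with hl'
    have hl'0 : ∀ i, 0 ≤ l' i := by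
      intro i
      by_cases hbi : 0 < b i
      · have hiP : i ∈ P := Finset.mem_filter.2 ⟨Finset.mem_univ _, hbi⟩
        have h1 : t₀ ≤ l i / b i := Finset.inf'_le _ hiP
        have h2 := (le_div_iff₀ hbi).1 h1
        have : l' i = l i - t₀ * b i := rfl
        rw [this]
        linarith
      · push_neg at hbi
        have h1 : t₀ * b i ≤ 0 := mul_nonpos_of_nonneg_of_nonpos ht₀pos.le hbi
        have h2 := hl i
        have : l' i = l i - t₀ * b i := rfl
        rw [this]
        linarith
    have hl'iστ : l' iστ = 0 := by
      have hbiστ : 0 < b iστ := (Finset.mem_filter.1 hiστP).2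
      have : l' iστ = l iστ - t₀ * b iστ := rfl
      rw [this, ht₀, hiστ]
      field_simp
      ring
    have hliστ : l iστ ≠ 0 := hbsupp iστ (ne_of_gt (Finset.mem_filter.1 hiστP).2)
    have hsub : Finset.univ.filter (fun i => l' i ≠ 0) ⊂ s := by
      rw [Finset.ssubset_iff_of_subset]
      · exact ⟨iστ, Finset.mem_filter.2 ⟨Finset.mem_univ _, hliστ⟩,
          fun h => (Finset.mem_filter.1 h).2 hl'iστ⟩
      · intro i hi
        have hi' : l' i ≠ 0 := (Finset.mem_filter.1 hi).2
        refine Finset.mem_filter.2 ⟨Finset.mem_univ _, ?_⟩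
        intro h
        have hbi : b i = 0 := not_not.1 (fun hb => hbsupp i hb h)
        simp [hl', h, hbi] at hi'
    have hcard' : (Finset.univ.filter (fun i => l' i ≠ 0)).card ≤ N := by
      have := Finset.card_lt_card hsub
      omega
    have hsum' : ∑ i, l' i • p i = ∑ i, l i • p i := by
      simp only [hl', sub_smul, Finset.sum_sub_distrib, mul_smul, ← Finset.smul_sum, hbsum,
        smul_zero, sub_zero]
    obtain ⟨t, hind', l'', h1, h2, h3⟩ := ih l' hcard' hl'0
    exact ⟨t, hind', l'', h1, h2, h3.trans hsum'⟩

end cone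

section closed

variable {E : Type*} [NormedAddCommGroup E] [NormedSpace ℝ E] [FiniteDimensional ℝ E]

lemma auxCone_isClosed {n : ℕ} (p : Fin n → E) : IsClosed (auxCone p) := by
  have hrw : auxCone p = ⋃ t ∈ {t : Finset (Fin n) | LinearIndependent ℝ (fun i : t => p i)},
      {x | ∃ l : Fin n → ℝ, (∀ i, 0 ≤ l i) ∧ (∀ i ∉ t, l i = 0) ∧ ∑ i, l i • p i = x} := by
    ext x
    simp only [Set.mem_iUnion, Set.mem_setOf_eq]
    constructor
    · rintro ⟨l, hl0, hl⟩
      obtain ⟨t, hind, l', h1, h2, h3⟩ :=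
        auxCone_caratheodory p (Finset.univ.filter (fun i => l i ≠ 0)).card l le_rfl hl0
      exact ⟨t, hind, l', h1, h2, h3.trans hl⟩
    · rintro ⟨t, _, l, h1, _, h3⟩
      exact ⟨l, h1, h3⟩
  rw [hrw]
  apply Set.Finite.isClosed_biUnion (Set.toFinite _)
  intro t ht
  have hLker : ∀ g : (↥t → ℝ), (∑ i : ↥t, g i • p ↑i) = 0 → g = 0 := by
    intro g hg
    funext i
    exact (Fintype.linearIndependent_iff.1 ht) g hg i
  set L : (↥t → ℝ) →ₗ[ℝ] E :=
    { toFun := fun g => ∑ i : ↥t, g i • p ↑i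
      map_add' := fun g h => by
        simp only [Pi.add_apply, add_smul, Finset.sum_add_distrib]
      map_smul' := fun r g => by
        simp only [Pi.smul_apply, smul_eq_mul, mul_smul, ← Finset.smul_sum, RingHom.id_apply] }
    with hL
  have himg : {x | ∃ l : Fin n → ℝ, (∀ i, 0 ≤ l i) ∧ (∀ i ∉ t, l i = 0) ∧ ∑ i, l i • p i = x}
      = L '' {g : ↥t → ℝ | ∀ i, 0 ≤ g i} := by
    ext x
    constructor
    · rintro ⟨l, h1, h2, h3⟩
      refine ⟨fun i => l ↑i, fun i => h1 ↑i, ?_⟩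
      show (∑ i : ↥t, l ↑i • p ↑i) = x
      rw [auxSumSubtype t (fun i => l i • p i) (fun i hi => by beta_reduce; rw [h2 i hi, zero_smul])]
      exact h3
    · rintro ⟨g, hg, rfl⟩
      refine ⟨fun i => if h : i ∈ t then g ⟨i, h⟩ else 0, ?_, ?_, ?_⟩
      · intro i
        by_cases h : i ∈ t
        · simpa [dif_pos h] using hg ⟨i, h⟩
        · simp [dif_neg h]
      · intro i hi
        simp [dif_neg hi]
      · show _ = L g
        rw [← auxSumSubtype t (fun i => (if h : i ∈ t then g ⟨i, h⟩ else 0) • p i)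
          (fun i hi => by simp [dif_neg hi])]
        exact Finset.sum_congr rfl (fun i _ => by simp [dif_pos i.2])
  rw [himg]
  have hinj : LinearMap.ker L = ⊥ := by
    rw [LinearMap.ker_eq_bot']
    intro g hg
    exact hLker g hg
  have hclosed : IsClosed {g : ↥t → ℝ | ∀ i, 0 ≤ g i} := by
    have : {g : ↥t → ℝ | ∀ i, 0 ≤ g i} = ⋂ i, {g | 0 ≤ g i} := by
      ext g; simp [Set.mem_iInter]
    rw [this]
    exact isClosed_iInter (fun i => isClosed_le continuous_const (continuous_apply i))
  exact (L.isClosedEmbedding_of_injective hinj).isClosedMap _ hclosed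

lemma auxSeparation {n : ℕ} (p : Fin n → E) {y : E} (hy : y ∉ auxCone p) :
    ∃ ψ : E →L[ℝ] ℝ, (∀ i, 0 ≤ ψ (p i)) ∧ ψ y < 0 := by
  obtain ⟨f, u, hfu, huy⟩ :=
    geometric_hahn_banach_closed_point (auxCone_convex p) (auxCone_isClosed p) hy
  have hu0 : 0 < u := by
    have := hfu 0 (auxCone_zero_mem p)
    simpa using this
  have hfd : ∀ x ∈ auxCone p, f x ≤ 0 := by
    intro x hx
    by_contra h
    push_neg at h
    have hmem : (u / f x) • x ∈ auxCone p := auxCone_smul_mem p hx (div_nonneg hu0.le h.le)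
    have := hfu _ hmem
    rw [map_smul, smul_eq_mul, div_mul_cancel₀ _ (ne_of_gt h)] at this
    exact lt_irrefl u this
  refine ⟨-f, fun i => ?_, ?_⟩
  · have := hfd (p i) (auxCone_gen_mem p i)
    simpa using this
  · have : 0 < f y := lt_trans hu0 huy
    simpa using this

end closed

/-- A face of a convex set `Δ`, in the sense of an argmin set of a linear functional. -/
def IsFace {V : Type*} [AddCommGroup V] [Module ℝ V] (Δ F : Set V) : Prop :=
  ∃ φ : V →ₗ[ℝ] ℝ, F = {w ∈ Δ | ∀ u ∈ Δ, φ w ≤ φ u}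

/-- Lemma 4.10 (l:tropcritmax): the `ε = 0` tropical critical condition at `d` holds iff the
lowest face of the augmented Newton polytope w.r.t. `(1,d)` is the minimal face `F` containing
the lowest point `(τ,0)` above `0`. -/
theorem stmt_13 (r n : ℕ) (hn : 0 < n) (v : Fin n → (Fin r → ℝ)) (c : Fin n → ℝ)
    (h0 : (0 : Fin r → ℝ) ∈ interior (convexHull ℝ (Set.range v)))
    (τ : ℝ)
    (hτ : IsLeast {x : ℝ | ((x, (0 : Fin r → ℝ)) : ℝ × (Fin r → ℝ)) ∈
        convexHull ℝ (Set.range (fun i => ((c i, v i) : ℝ × (Fin r → ℝ))))} τ)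
    (F : Set (ℝ × (Fin r → ℝ)))
    (hFface : IsFace (convexHull ℝ (Set.range (fun i => ((c i, v i) : ℝ × (Fin r → ℝ))))) F)
    (hFmem : ((τ, (0 : Fin r → ℝ)) : ℝ × (Fin r → ℝ)) ∈ F)
    (hFmin : ∀ F' : Set (ℝ × (Fin r → ℝ)),
      IsFace (convexHull ℝ (Set.range (fun i => ((c i, v i) : ℝ × (Fin r → ℝ))))) F' →
      ((τ, (0 : Fin r → ℝ)) : ℝ × (Fin r → ℝ)) ∈ F' → F ⊆ F')
    (d : Fin r → ℝ) :
    (∃ w : Fin n → ℝ,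
      (∀ i,
        ((c i + ∑ j, v i j * d j =
            Finset.univ.inf' ⟨⟨0, hn⟩, Finset.mem_univ _⟩
              (fun i' => c i' + ∑ j, v i' j * d j)) → 0 < w i) ∧
        ((c i + ∑ j, v i j * d j ≠
            Finset.univ.inf' ⟨⟨0, hn⟩, Finset.mem_univ _⟩
              (fun i' => c i' + ∑ j, v i' j * d j)) → w i = 0)) ∧
      (∑ i, w i) = 1 ∧ (∑ i, w i • v i) = 0) ↔
    {w ∈ convexHull ℝ (Set.range (fun i => ((c i, v i) : ℝ × (Fin r → ℝ)))) |
      ∀ u ∈ convexHull ℝ (Set.range (fun i => ((c i, v i) : ℝ × (Fin r → ℝ)))),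
        w.1 + ∑ j, w.2 j * d j ≤ u.1 + ∑ j, u.2 j * d j} = F := by
  classical
  set p : Fin n → ℝ × (Fin r → ℝ) := fun i => ((c i, v i) : ℝ × (Fin r → ℝ)) with hp
  set Δ : Set (ℝ × (Fin r → ℝ)) := convexHull ℝ (Set.range p) with hΔ
  set m : ℝ := Finset.univ.inf' ⟨⟨0, hn⟩, Finset.mem_univ _⟩
    (fun i' => c i' + ∑ j, v i' j * d j) with hm
  set φ : (ℝ × (Fin r → ℝ)) →ₗ[ℝ] ℝ :=
    { toFun := fun w => w.1 + ∑ j, w.2 j * d j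
      map_add' := fun x y => by
        show (x.1 + y.1) + ∑ j, (x.2 j + y.2 j) * d j =
          (x.1 + ∑ j, x.2 j * d j) + (y.1 + ∑ j, y.2 j * d j)
        simp_rw [add_mul]
        rw [Finset.sum_add_distrib]
        ring
      map_smul' := fun t x => by
        show t * x.1 + ∑ j, (t * x.2 j) * d j = t * (x.1 + ∑ j, x.2 j * d j)
        rw [mul_add, Finset.mul_sum]
        simp_rw [mul_assoc] } with hφ
  have hφp : ∀ i, φ (p i) = c i + ∑ j, v i j * d j := fun i => rfl
  have hm_le : ∀ i, m ≤ φ (p i) := fun i => Finset.inf'_le _ (Finset.mem_univ i)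
  obtain ⟨iₘ, -, hiₘ⟩ := Finset.exists_mem_eq_inf' (⟨⟨0, hn⟩, Finset.mem_univ _⟩ :
    (Finset.univ : Finset (Fin n)).Nonempty) (fun i' => c i' + ∑ j, v i' j * d j)
  have hφiₘ : φ (p iₘ) = m := by rw [hφp iₘ, hm, hiₘ]
  have hpΔ : ∀ i, p i ∈ Δ := fun i => subset_convexHull ℝ _ (Set.mem_range_self i)
  have hkey : ∀ (χ : (ℝ × (Fin r → ℝ)) →ₗ[ℝ] ℝ) (w : Fin n → ℝ),
      χ (∑ i, w i • p i) = ∑ i, w i * χ (p i) := by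
    intro χ w
    rw [map_sum]
    exact Finset.sum_congr rfl (fun i _ => by rw [map_smul, smul_eq_mul])
  have hlb : ∀ (χ : (ℝ × (Fin r → ℝ)) →ₗ[ℝ] ℝ) (b : ℝ), (∀ i, b ≤ χ (p i)) →
      ∀ u ∈ Δ, b ≤ χ u := by
    intro χ b hb u hu
    rw [hΔ, auxMemHullIff] at hu
    obtain ⟨w, hw0, hw1, rfl⟩ := hu
    rw [hkey]
    calc b = ∑ i, w i * b := by rw [← Finset.sum_mul, hw1, one_mul]
    _ ≤ ∑ i, w i * χ (p i) :=
      Finset.sum_le_sum (fun i _ => mul_le_mul_of_nonneg_left (hb i) (hw0 i))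
  have hA : ∀ u ∈ Δ, m ≤ φ u := hlb φ m hm_le
  have hτm0 : φ ((τ, (0 : Fin r → ℝ)) : ℝ × (Fin r → ℝ)) = τ := by
    show τ + ∑ j, (0 : Fin r → ℝ) j * d j = τ
    simp
  have hB : ∀ x : ℝ × (Fin r → ℝ), (x ∈ Δ ∧ φ x = m) ↔
      (x ∈ Δ ∧ ∀ u ∈ Δ, φ x ≤ φ u) := by
    intro x
    constructor
    · rintro ⟨hx, hx2⟩
      exact ⟨hx, fun u hu => hx2 ▸ hA u hu⟩
    · rintro ⟨hx, hx2⟩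
      exact ⟨hx, le_antisymm (hφiₘ ▸ hx2 (p iₘ) (hpΔ iₘ)) (hA x hx)⟩
  -- support lemma
  have hC : ∀ w : Fin n → ℝ, (∀ i, 0 ≤ w i) → (∑ i, w i) = 1 →
      φ (∑ i, w i • p i) = m → ∀ i, φ (p i) ≠ m → w i = 0 := by
    intro w hw0 hw1 hwm i hi
    have hsum : ∑ i, w i * (φ (p i) - m) = 0 := by
      simp_rw [mul_sub]
      rw [Finset.sum_sub_distrib, ← hkey φ w, hwm, ← Finset.sum_mul, hw1, one_mul, sub_self]
    rw [Finset.sum_eq_zero_iff_of_nonneg (fun i _ =>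
      mul_nonneg (hw0 i) (sub_nonneg.2 (hm_le i)))] at hsum
    have := hsum i (Finset.mem_univ i)
    rcases mul_eq_zero.1 this with h | h
    · exact h
    · exact absurd (sub_eq_zero.1 h) hi
  constructor
  · -- forward direction
    rintro ⟨w, hw, hw1, hw0⟩
    have hwnn : ∀ i, 0 ≤ w i := by
      intro i
      by_cases h : c i + ∑ j, v i j * d j = m
      · exact ((hw i).1 h).le
      · exact ((hw i).2 h).ge
    set x : ℝ × (Fin r → ℝ) := ∑ i, w i • p i with hx
    have hxΔ : x ∈ Δ := by
      rw [hΔ, auxMemHullIff]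
      exact ⟨w, hwnn, hw1, rfl⟩
    have hφx : φ x = m := by
      rw [hx, hkey]
      have : ∀ i ∈ Finset.univ, w i * φ (p i) = w i * m := by
        intro i _
        by_cases h : c i + ∑ j, v i j * d j = m
        · rw [hφp i, h]
        · rw [(hw i).2 h, zero_mul, zero_mul]
      rw [Finset.sum_congr rfl this, ← Finset.sum_mul, hw1, one_mul]
    have hx2 : x.2 = 0 := by
      rw [hx, Prod.snd_sum]
      simpa using hw0
    have hx1 : x.1 = m := by
      have h := hφx
      have h2 : x.1 + ∑ j, x.2 j * d j = m := h
      rw [hx2] at h2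
      simpa using h2
    have hxeq : x = ((m, 0) : ℝ × (Fin r → ℝ)) := Prod.ext hx1 hx2
    have hτm : τ = m := by
      refine le_antisymm (hτ.2 ?_) ?_
      · show ((m, (0 : Fin r → ℝ)) : ℝ × (Fin r → ℝ)) ∈ Δ
        rw [← hxeq]; exact hxΔ
      · have := hA _ hτ.1
        rwa [hτm0] at this
    have hτG : ((τ, (0 : Fin r → ℝ)) : ℝ × (Fin r → ℝ)) ∈ Δ ∧
        ∀ u ∈ Δ, φ ((τ, (0 : Fin r → ℝ)) : ℝ × (Fin r → ℝ)) ≤ φ u :=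
      (hB _).1 ⟨hτ.1, by rw [hτm0, hτm]⟩
    have hmain : {w ∈ Δ | ∀ u ∈ Δ, φ w ≤ φ u} = F := by
      apply Set.Subset.antisymm
      · -- G ⊆ F
        obtain ⟨ψ, hψ⟩ := hFface
        have hFmem' := hFmem
        rw [hψ] at hFmem'
        obtain ⟨hτΔ, hμmin⟩ := hFmem'
        have hτx : ((τ, (0 : Fin r → ℝ)) : ℝ × (Fin r → ℝ)) = x := by
          rw [hxeq, hτm]
        have hψp : ∀ i, φ (p i) = m → ψ (p i) = ψ ((τ, (0 : Fin r → ℝ)) : ℝ × (Fin r → ℝ)) := by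
          intro i hi
          have hsum : ∑ k, w k * (ψ (p k) - ψ ((τ, (0 : Fin r → ℝ)) : ℝ × (Fin r → ℝ))) = 0 := by
            simp_rw [mul_sub]
            rw [Finset.sum_sub_distrib, ← hkey ψ w, ← hx, ← hτx, ← Finset.sum_mul, hw1, one_mul,
              sub_self]
          rw [Finset.sum_eq_zero_iff_of_nonneg (fun k _ =>
            mul_nonneg (hwnn k) (sub_nonneg.2 (hμmin _ (hpΔ k))))] at hsum
          have hwi : 0 < w i := (hw i).1 (by rw [← hφp i]; exact hi)
          have := hsum i (Finset.mem_univ i)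
          rcases mul_eq_zero.1 this with h | h
          · exact absurd h (ne_of_gt hwi)
          · exact sub_eq_zero.1 h
        rintro z ⟨hzΔ, hzmin⟩
        have hφz : φ z = m := ((hB z).2 ⟨hzΔ, hzmin⟩).2
        have hzΔ' := hzΔ
        rw [hΔ, auxMemHullIff] at hzΔ'
        obtain ⟨t, ht0, ht1, htz⟩ := hzΔ'
        have htsupp : ∀ i, φ (p i) ≠ m → t i = 0 := hC t ht0 ht1 (by rw [htz]; exact hφz)
        have hψz : ψ z = ψ ((τ, (0 : Fin r → ℝ)) : ℝ × (Fin r → ℝ)) := by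
          rw [← htz, hkey]
          have : ∀ i ∈ Finset.univ,
              t i * ψ (p i) = t i * ψ ((τ, (0 : Fin r → ℝ)) : ℝ × (Fin r → ℝ)) := by
            intro i _
            by_cases h : φ (p i) = m
            · rw [hψp i h]
            · rw [htsupp i h, zero_mul, zero_mul]
          rw [Finset.sum_congr rfl this, ← Finset.sum_mul, ht1, one_mul]
        rw [hψ]
        exact ⟨hzΔ, fun u hu => by rw [hψz]; exact hμmin u hu⟩
      · -- F ⊆ G
        exact hFmin _ ⟨φ, rfl⟩ hτG
    exact hmain
  · -- backward direction
    intro hGF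
    have hGF' : {w ∈ Δ | ∀ u ∈ Δ, φ w ≤ φ u} = F := hGF
    have hτG : ((τ, (0 : Fin r → ℝ)) : ℝ × (Fin r → ℝ)) ∈
        {w ∈ Δ | ∀ u ∈ Δ, φ w ≤ φ u} := by rw [hGF']; exact hFmem
    have hτm : τ = m := by
      refine le_antisymm ?_ ?_
      · have := hτG.2 (p iₘ) (hpΔ iₘ)
        rwa [hτm0, hφiₘ] at this
      · have := hA _ hτ.1
        rwa [hτm0] at this
    set x : ℝ × (Fin r → ℝ) := ((τ, (0 : Fin r → ℝ)) : ℝ × (Fin r → ℝ)) with hxdef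
    -- every minimizing vertex admits a representation of x with positive weight there
    have hclaim : ∀ i, φ (p i) = m → ∃ t : Fin n → ℝ, (∀ j, 0 ≤ t j) ∧ (∑ j, t j) = 1 ∧
        (∑ j, t j • p j) = x ∧ 0 < t i := by
      intro i hi
      by_contra hno
      push_neg at hno
      -- x - p i is not in the cone generated by the (p j - x)
      have hynot : x - p i ∉ auxCone (fun j => p j - x) := by
        rintro ⟨l, hl0, hlsum⟩
        set s : ℝ := ∑ j, l j with hs
        have hs0 : 0 ≤ s := Finset.sum_nonneg (fun j _ => hl0 j)
        have h1s : (0:ℝ) < 1 + s := by linarith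
        have hsum2 : ∑ j, l j • p j - s • x = x - p i := by
          rw [← hlsum, hs, Finset.sum_smul]
          rw [← Finset.sum_sub_distrib]
          exact Finset.sum_congr rfl (fun j _ => by rw [smul_sub])
        have h2 : (∑ j, l j • p j) + p i = (1 + s) • x := by
          rw [add_smul, one_smul]
          calc (∑ j, l j • p j) + p i
              = ((∑ j, l j • p j) - s • x) + (s • x + p i) := by abel
          _ = (x - p i) + (s • x + p i) := by rw [hsum2]
          _ = x + s • x := by abel
        set t : Fin n → ℝ := fun j => (1 + s)⁻¹ * (l j + if j = i then 1 else 0) with ht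
        have ht0 : ∀ j, 0 ≤ t j := by
          intro j
          apply mul_nonneg (inv_nonneg.2 h1s.le)
          have hlj := hl0 j
          by_cases h : j = i
          · rw [if_pos h]; linarith
          · rw [if_neg h]; linarith
        have ht1 : ∑ j, t j = 1 := by
          rw [ht]
          rw [← Finset.mul_sum, Finset.sum_add_distrib]
          simp only [Finset.sum_ite_eq', Finset.mem_univ, if_pos]
          rw [← hs]
          field_simp
          ring
        have htx : ∑ j, t j • p j = x := by
          have : ∀ j ∈ Finset.univ, t j • p j =
              (1 + s)⁻¹ • ((l j + if j = i then 1 else 0) • p j) := by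
            intro j _
            rw [ht, mul_smul]
          rw [Finset.sum_congr rfl this, ← Finset.smul_sum]
          have : ∑ j, ((l j + if j = i then 1 else 0) • p j) = (∑ j, l j • p j) + p i := by
            simp_rw [add_smul, ite_smul, one_smul, zero_smul]
            rw [Finset.sum_add_distrib]
            congr 1
            simp
          rw [this, h2, smul_smul, inv_mul_cancel₀ (ne_of_gt h1s), one_smul]
        have hti : 0 < t i := by
          show 0 < (1 + s)⁻¹ * (l i + if i = i then 1 else 0)
          rw [if_pos rfl]
          have := hl0 i
          have h1 : 0 < l i + 1 := by linarith
          exact mul_pos (inv_pos.2 h1s) h1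
        exact absurd hti (by simpa using hno t ht0 ht1 htx)
      obtain ⟨ψ, hψ1, hψ2⟩ := auxSeparation (fun j => p j - x) hynot
      have hψp : ∀ j, ψ x ≤ ψ (p j) := by
        intro j
        have := hψ1 j
        rw [map_sub] at this
        linarith
      have hψq : ψ x < ψ (p i) := by
        have := hψ2
        rw [map_sub] at this
        linarith
      set χ : (ℝ × (Fin r → ℝ)) →ₗ[ℝ] ℝ := φ + ψ.toLinearMap with hχ
      have hφx : φ x = m := by rw [hxdef, hτm0, hτm]
      have hχx_le : ∀ j, χ x ≤ χ (p j) := by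
        intro j
        have h1 : φ x ≤ φ (p j) := by rw [hφx]; exact hm_le j
        have h2 := hψp j
        simp only [hχ, LinearMap.add_apply, ContinuousLinearMap.coe_coe]
        linarith
      have hxF' : x ∈ {w ∈ Δ | ∀ u ∈ Δ, χ w ≤ χ u} :=
        ⟨hτ.1, hlb χ (χ x) hχx_le⟩
      have hFsub : F ⊆ {w ∈ Δ | ∀ u ∈ Δ, χ w ≤ χ u} := hFmin _ ⟨χ, rfl⟩ hxF'
      have hpiF : p i ∈ F := by
        rw [← hGF']
        exact (hB (p i)).1 ⟨hpΔ i, hi⟩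
      have := (hFsub hpiF).2 x hτ.1
      have hχlt : χ x < χ (p i) := by
        have h1 : φ x = φ (p i) := by rw [hφx, hi]
        simp only [hχ, LinearMap.add_apply, ContinuousLinearMap.coe_coe]
        linarith
      linarith
    -- assemble the witness by averaging
    set S' : Finset (Fin n) := Finset.univ.filter (fun i => φ (p i) = m) with hS'
    have hS'ne : S'.Nonempty := ⟨iₘ, Finset.mem_filter.2 ⟨Finset.mem_univ _, hφiₘ⟩⟩
    have hcardpos : (0:ℝ) < (S'.card : ℝ) := by
      exact_mod_cast Finset.card_pos.2 hS'ne
    set T : Fin n → (Fin n → ℝ) := fun k =>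
      if h : φ (p k) = m then Classical.choose (hclaim k h) else (fun _ => 0) with hT
    have hTspec : ∀ k ∈ S', (∀ j, 0 ≤ T k j) ∧ (∑ j, T k j) = 1 ∧
        (∑ j, T k j • p j) = x ∧ 0 < T k k := by
      intro k hk
      have h := (Finset.mem_filter.1 hk).2
      have := Classical.choose_spec (hclaim k h)
      rw [hT]
      simpa [dif_pos h] using this
    have hTsupp : ∀ k ∈ S', ∀ i, φ (p i) ≠ m → T k i = 0 := by
      intro k hk i hi
      obtain ⟨h1, h2, h3, -⟩ := hTspec k hk
      exact hC (T k) h1 h2 (by rw [h3, hxdef, hτm0, hτm]) i hi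
    set w : Fin n → ℝ := fun i => (∑ k ∈ S', T k i) / (S'.card : ℝ) with hw
    refine ⟨w, ?_, ?_, ?_⟩
    · intro i
      constructor
      · intro hi
        have hi' : φ (p i) = m := by rw [hφp i]; exact hi
        have hiS' : i ∈ S' := Finset.mem_filter.2 ⟨Finset.mem_univ _, hi'⟩
        show 0 < (∑ k ∈ S', T k i) / (S'.card : ℝ)
        apply div_pos _ hcardpos
        apply Finset.sum_pos' (fun k hk => (hTspec k hk).1 i)
        exact ⟨i, hiS', (hTspec i hiS').2.2.2⟩
      · intro hi
        have hi' : φ (p i) ≠ m := by rw [hφp i]; exact hi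
        show (∑ k ∈ S', T k i) / (S'.card : ℝ) = 0
        rw [Finset.sum_eq_zero (fun k hk => hTsupp k hk i hi'), zero_div]
    · show (∑ i, (∑ k ∈ S', T k i) / (S'.card : ℝ)) = 1
      rw [← Finset.sum_div]
      rw [Finset.sum_comm]
      rw [Finset.sum_congr rfl (fun k hk => (hTspec k hk).2.1)]
      rw [Finset.sum_const, nsmul_eq_mul, mul_one]
      exact div_self (ne_of_gt hcardpos)
    · have hsump : ∑ i, w i • p i = x := by
        have h1 : ∀ i ∈ Finset.univ, w i • p i =
            (S'.card : ℝ)⁻¹ • (∑ k ∈ S', T k i • p i) := by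
          intro i _
          show ((∑ k ∈ S', T k i) / (S'.card : ℝ)) • p i = _
          rw [div_eq_inv_mul, mul_smul, Finset.sum_smul]
        rw [Finset.sum_congr rfl h1, ← Finset.smul_sum, Finset.sum_comm]
        rw [Finset.sum_congr rfl (fun k hk => (hTspec k hk).2.2.1)]
        rw [Finset.sum_const, ← Nat.cast_smul_eq_nsmul ℝ, smul_smul,
          inv_mul_cancel₀ (ne_of_gt hcardpos), one_smul]
      have := congrArg Prod.snd hsump
      rw [Prod.snd_sum] at this
      simpa using this
end

section
/- Let 0 → ℝ →^η V →^β U → 0 be a short exact sequence of finite-dimensional real vector spaces, let 𝒲 ⊂ V be a finite set such that β(convexHull 𝒲) is full-dimensional in U with 0 in its interior, and assume dim U > 0. Let 𝒲̄ = { w ∈ 𝒲 : β(w) ≠ 0 } and Δ̄ = convexHull 𝒲̄, with minimal height τ̄ = min { c : η(c) ∈ Δ̄ }. Let F be the minimal face of Δ̄ containing η(τ̄) and E the linear span of F − η(τ̄). Then ker(β) ∩ E = {0}; equivalently, the induced map η' : ℝ → V/E is injective and the sequence 0 → ℝ → V/E → U/β(E) → 0 is exact. -/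
open Pointwise


set_option maxHeartbeats 1600000 in
/-- Exactness part of Lemma 4.16 (l:goodLaurent): in a complete Newton datum
`0 → ℝ →η V →β U → 0`, with `Δ̄` the reduced polytope, `τ̄` its minimal height, `F` the minimal
face of `Δ̄` containing `η τ̄`, and `E = span(F - η τ̄)`, one has `ker β ∩ E = {0}`. -/
theorem stmt_16 {V U : Type*}
    [NormedAddCommGroup V] [NormedSpace ℝ V] [FiniteDimensional ℝ V]
    [NormedAddCommGroup U] [NormedSpace ℝ U] [FiniteDimensional ℝ U]
    (η : ℝ →ₗ[ℝ] V) (β : V →ₗ[ℝ] U)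
    (hη : Function.Injective η) (hβ : Function.Surjective β)
    (hexact : LinearMap.range η = LinearMap.ker β)
    (s : Finset V)
    (hfull : (0 : U) ∈ interior (β '' (convexHull ℝ (s : Set V))))
    (hdim : 0 < Module.finrank ℝ U)
    (τ : ℝ)
    (hτ : IsLeast {x : ℝ | η x ∈ convexHull ℝ {w ∈ (s : Set V) | β w ≠ 0}} τ)
    (F : Set V)
    (hFface : ∃ φ : V →ₗ[ℝ] ℝ,
      F = {w ∈ convexHull ℝ {w ∈ (s : Set V) | β w ≠ 0} |
        ∀ u ∈ convexHull ℝ {w ∈ (s : Set V) | β w ≠ 0}, φ w ≤ φ u})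
    (hFmem : η τ ∈ F)
    (hFmin : ∀ F' : Set V,
      (∃ φ : V →ₗ[ℝ] ℝ,
        F' = {w ∈ convexHull ℝ {w ∈ (s : Set V) | β w ≠ 0} |
          ∀ u ∈ convexHull ℝ {w ∈ (s : Set V) | β w ≠ 0}, φ w ≤ φ u}) →
      η τ ∈ F' → F ⊆ F') :
    Disjoint (LinearMap.ker β) (Submodule.span ℝ ((fun x => x - η τ) '' F)) := by
  classical
  set x : V := η τ with hxdef
  obtain ⟨φ, hF⟩ := hFface
  set sW : Finset V := s.filter (fun w => β w ≠ 0) with hsW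
  have hWcoe : (sW : Set V) = {w ∈ (s : Set V) | β w ≠ 0} := by
    ext v; simp [hsW]
  set Δ : Set V := convexHull ℝ (sW : Set V) with hΔdef
  have hΔeq : convexHull ℝ {w ∈ (s : Set V) | β w ≠ 0} = Δ := by rw [hΔdef, hWcoe]
  rw [hΔeq] at hF
  have hτlb : ∀ r : ℝ, η r ∈ Δ → τ ≤ r := by
    intro r hr
    exact hτ.2 (by rw [Set.mem_setOf_eq, hΔeq]; exact hr)
  have hFmin' : ∀ ψ : V →ₗ[ℝ] ℝ, x ∈ {w ∈ Δ | ∀ u ∈ Δ, ψ w ≤ ψ u} →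
      F ⊆ {w ∈ Δ | ∀ u ∈ Δ, ψ w ≤ ψ u} := by
    intro ψ hx
    exact hFmin _ ⟨ψ, by rw [hΔeq]⟩ hx
  rw [hF] at hFmem
  obtain ⟨hxΔ, hxmin⟩ := hFmem
  -- basic helpers
  have hull_weights : ∀ (t : Finset V) (u : V), u ∈ convexHull ℝ (t : Set V) →
      ∃ w : V → ℝ, (∀ v ∈ t, 0 ≤ w v) ∧ ∑ v ∈ t, w v = 1 ∧ ∑ v ∈ t, w v • v = u := by
    intro t u hu
    rw [Finset.convexHull_eq] at hu
    obtain ⟨w, h0, h1, hc⟩ := hu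
    refine ⟨w, h0, h1, ?_⟩
    rw [Finset.centerMass_eq_of_sum_1 _ _ h1] at hc
    simpa using hc
  have weights_hull : ∀ (t : Finset V) (w : V → ℝ), (∀ v ∈ t, 0 ≤ w v) →
      (∑ v ∈ t, w v = 1) → (∑ v ∈ t, w v • v) ∈ convexHull ℝ (t : Set V) := by
    intro t w h0 h1
    have := t.centerMass_mem_convexHull h0 (by rw [h1]; norm_num)
      (fun i hi => Finset.mem_coe.2 hi)
    rw [Finset.centerMass_eq_of_sum_1 _ _ h1] at this
    simpa using this
  have hull_lb : ∀ (ψ : V →ₗ[ℝ] ℝ) (c : ℝ) (t : Finset V), (∀ v ∈ t, c ≤ ψ v) →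
      ∀ u ∈ convexHull ℝ (t : Set V), c ≤ ψ u := by
    intro ψ c t h u hu
    exact convexHull_min (fun v hv => h v hv) (convex_halfSpace_ge (LinearMap.isLinear ψ) c) hu
  have span_weights : ∀ (t : Finset V) (y : V),
      y ∈ Submodule.span ℝ ((fun v => v - x) '' (t : Set V)) →
      ∃ c : V → ℝ, ∑ v ∈ t, c v • (v - x) = y := by
    intro t y hy
    have himg : ((fun v => v - x) '' (t : Set V)) = ((t.image (fun v => v - x)) : Set V) := by
      rw [Finset.coe_image]
    rw [himg, Submodule.mem_span_finset] at hy
    obtain ⟨f, -, hf⟩ := hy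
    refine ⟨fun v => f (v - x), ?_⟩
    rw [← hf, Finset.sum_image]
    intro a _ b _ hab
    exact sub_left_inj.1 hab
  have sum_ite : ∀ (t1 t2 : Finset V) (g : V → ℝ), t1 ⊆ t2 →
      ∑ v ∈ t2, (if v ∈ t1 then g v else 0) = ∑ v ∈ t1, g v := by
    intro t1 t2 g hsub
    rw [← Finset.sum_subset hsub (fun v _ hv => if_neg hv)]
    exact Finset.sum_congr rfl fun v hv => if_pos hv
  have sum_ite_smul : ∀ (t1 t2 : Finset V) (g : V → ℝ), t1 ⊆ t2 →
      ∑ v ∈ t2, (if v ∈ t1 then g v else 0) • v = ∑ v ∈ t1, g v • v := by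
    intro t1 t2 g hsub
    rw [← Finset.sum_subset hsub (fun v _ hv => by rw [if_neg hv, zero_smul])]
    exact Finset.sum_congr rfl fun v hv => by rw [if_pos hv]
  have arith : ∀ t a g : ℝ, 0 ≤ t → 0 ≤ a → t ≤ g / (2 * (a + 1)) → t * a ≤ g / 2 := by
    intro t a g ht ha hle
    have h2 : (0:ℝ) < 2 * (a + 1) := by positivity
    rw [le_div_iff₀ h2] at hle
    nlinarith
  have arith2 : ∀ t d g : ℝ, 0 < t → 0 < g → t ≤ g / (|d| + 1) → t * d < g := by
    intro t d g ht hg hle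
    have h2 : (0:ℝ) < |d| + 1 := by positivity
    rw [le_div_iff₀ h2] at hle
    nlinarith [le_abs_self d, abs_nonneg d]
  -- the minimizing vertices
  set sWF : Finset V := sW.filter (fun v => φ v = φ x) with hsWF
  have hsWFsub : sWF ⊆ sW := Finset.filter_subset _ _
  have facem : ∀ w ∈ Δ, φ w = φ x → w ∈ convexHull ℝ (sWF : Set V) := by
    intro w hw hφw
    obtain ⟨lam, h0, h1, h2⟩ := hull_weights sW w hw
    have hsum : ∑ v ∈ sW, lam v * (φ v - φ x) = 0 := by
      have hφsum : ∑ v ∈ sW, lam v * φ v = φ w := by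
        have := congrArg φ h2
        rw [map_sum] at this
        simpa [smul_eq_mul] using this
      have h3 : ∑ v ∈ sW, lam v * φ x = φ x := by
        rw [← Finset.sum_mul, h1, one_mul]
      calc ∑ v ∈ sW, lam v * (φ v - φ x)
          = (∑ v ∈ sW, lam v * φ v) - ∑ v ∈ sW, lam v * φ x := by
            rw [← Finset.sum_sub_distrib]; apply Finset.sum_congr rfl; intros; ring
        _ = 0 := by rw [hφsum, h3, hφw]; ring
    have hnn : ∀ v ∈ sW, 0 ≤ lam v * (φ v - φ x) := by
      intro v hv
      exact mul_nonneg (h0 v hv)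
        (sub_nonneg.2 (hxmin v (subset_convexHull ℝ _ (Finset.mem_coe.2 hv))))
    have hzero : ∀ v ∈ sW, v ∉ sWF → lam v = 0 := by
      intro v hv hvn
      have hz := (Finset.sum_eq_zero_iff_of_nonneg hnn).1 hsum v hv
      have hne : φ v - φ x ≠ 0 := by
        intro h
        exact hvn (Finset.mem_filter.2 ⟨hv, by linarith [sub_eq_zero.1 h]⟩)
      rcases mul_eq_zero.1 hz with h | h
      · exact h
      · exact absurd h hne
    have h1' : ∑ v ∈ sWF, lam v = 1 := by
      rw [← h1]; exact Finset.sum_subset hsWFsub (fun v hv hvn => hzero v hv hvn)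
    have h2' : ∑ v ∈ sWF, lam v • v = w := by
      rw [← h2]
      exact Finset.sum_subset hsWFsub (fun v hv hvn => by rw [hzero v hv hvn, zero_smul])
    have := weights_hull sWF lam (fun v hv => h0 v (hsWFsub hv)) h1'
    rwa [h2'] at this
  have hxWF : x ∈ convexHull ℝ (sWF : Set V) := facem x hxΔ rfl
  -- the support face S
  set S : Finset V := sWF.filter (fun v => ∃ w : V → ℝ, (∀ u ∈ sWF, 0 ≤ w u) ∧
      (∑ u ∈ sWF, w u = 1) ∧ (∑ u ∈ sWF, w u • u = x) ∧ 0 < w v) with hS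
  have hSsub : S ⊆ sWF := Finset.filter_subset _ _
  have hSne : S.Nonempty := by
    obtain ⟨w, h0, h1, h2⟩ := hull_weights sWF x hxWF
    obtain ⟨v, hv, hpos⟩ := Finset.exists_lt_of_sum_lt
      (show ∑ u ∈ sWF, (0 : ℝ) < ∑ u ∈ sWF, w u by rw [h1]; simp)
    exact ⟨v, Finset.mem_filter.2 ⟨hv, w, h0, h1, h2, hpos⟩⟩
  have hSw : ∀ v ∈ S, ∃ w : V → ℝ, (∀ u ∈ sWF, 0 ≤ w u) ∧
      (∑ u ∈ sWF, w u = 1) ∧ (∑ u ∈ sWF, w u • u = x) ∧ 0 < w v :=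
    fun v hv => (Finset.mem_filter.1 hv).2
  choose! wf hwf0 hwf1 hwf2 hwfpos using hSw
  have hcard : (0 : ℝ) < S.card := by
    exact_mod_cast Finset.card_pos.2 hSne
  set lam : V → ℝ := fun u => (∑ v ∈ S, wf v u) / S.card with hlam
  have lnn : ∀ u ∈ sWF, 0 ≤ lam u := by
    intro u hu
    apply div_nonneg _ hcard.le
    exact Finset.sum_nonneg fun v hv => hwf0 v hv u hu
  have lsum : ∑ u ∈ sWF, lam u = 1 := by
    have h : ∑ u ∈ sWF, ∑ v ∈ S, wf v u = S.card := by
      rw [Finset.sum_comm]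
      rw [Finset.sum_congr rfl fun v hv => hwf1 v hv]
      simp
    simp only [hlam]
    rw [← Finset.sum_div, h, div_self hcard.ne']
  have lx : ∑ u ∈ sWF, lam u • u = x := by
    have h : ∑ u ∈ sWF, (∑ v ∈ S, wf v u) • u = (S.card : ℝ) • x := by
      rw [Finset.sum_congr rfl fun u (_ : u ∈ sWF) => (Finset.sum_smul : (∑ v ∈ S, wf v u) • u = _)]
      rw [Finset.sum_comm]
      rw [Finset.sum_congr rfl fun v hv => hwf2 v hv]
      rw [Finset.sum_const]
      exact (Nat.cast_smul_eq_nsmul ℝ _ _).symm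
    have : ∑ u ∈ sWF, lam u • u = (S.card : ℝ)⁻¹ • ∑ u ∈ sWF, (∑ v ∈ S, wf v u) • u := by
      rw [Finset.smul_sum]
      apply Finset.sum_congr rfl
      intro u _
      simp only [hlam]
      rw [div_eq_inv_mul, mul_smul]
    rw [this, h, smul_smul, inv_mul_cancel₀ hcard.ne', one_smul]
  have lpos : ∀ v ∈ S, 0 < lam v := by
    intro v hv
    have hvF := hSsub hv
    have hle : wf v v ≤ ∑ v' ∈ S, wf v' v :=
      Finset.single_le_sum (fun v' hv' => hwf0 v' hv' v hvF) hv
    exact div_pos (lt_of_lt_of_le (hwfpos v hv) hle) hcard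
  have lsupp : ∀ u ∈ sWF, u ∉ S → lam u = 0 := by
    intro u hu huS
    by_contra h
    have hne : ∑ v ∈ S, wf v u ≠ 0 := by
      intro h0
      exact h (by rw [hlam]; simp [h0])
    obtain ⟨v, hv, hvne⟩ := Finset.exists_ne_zero_of_sum_ne_zero hne
    have hpos : 0 < wf v u := lt_of_le_of_ne (hwf0 v hv u hu) (Ne.symm hvne)
    exact huS (Finset.mem_filter.2 ⟨hu, wf v, hwf0 v hv, hwf1 v hv, hwf2 v hv, hpos⟩)
  clear_value lam
  clear hlam
  set E' : Submodule ℝ V := Submodule.span ℝ ((fun v => v - x) '' (S : Set V)) with hE'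
  have hSE : ∀ v ∈ S, v - x ∈ E' := by
    intro v hv
    exact Submodule.subset_span ⟨v, Finset.mem_coe.2 hv, rfl⟩
  -- key claim: all minimizing vertices differ from x by an element of E'
  have hkey : ∀ v₀ ∈ sWF, v₀ - x ∈ E' := by
    intro v₀ hv₀
    by_contra hv₀E
    set T : Finset V := sWF.filter (fun v => v - x ∉ E') with hT
    have hv₀T : v₀ ∈ T := Finset.mem_filter.2 ⟨hv₀, hv₀E⟩
    have hTsub : T ⊆ sWF := Finset.filter_subset _ _
    have hST : ∀ v ∈ S, v ∉ T := fun v hv hvT => (Finset.mem_filter.1 hvT).2 (hSE v hv)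
    have hTS : ∀ v ∈ T, v ∉ S := fun v hv hvS => hST v hvS hv
    set K : Set V := convexHull ℝ (T : Set V) + (E' : Set V) with hK
    have hxK : x ∉ K := by
      intro hxK
      rw [hK] at hxK
      obtain ⟨k, hk, e, he, hke⟩ := Set.mem_add.1 hxK
      obtain ⟨μ, hμ0, hμ1, hμ2⟩ := hull_weights T k hk
      have hkx : k - x ∈ E' := by
        have heq : k - x = -e := by rw [← hke]; abel
        rw [heq]; exact neg_mem he
      obtain ⟨c, hc⟩ := span_weights S (k - x) hkx
      set C : ℝ := ∑ v ∈ S, c v with hC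
      set μ' : V → ℝ := fun v => if v ∈ T then μ v else 0 with hμ'
      set c' : V → ℝ := fun v => if v ∈ S then c v else 0 with hc'
      obtain ⟨t0, ht0pos, ht1, ht2⟩ : ∃ t0 : ℝ, 0 < t0 ∧ t0 * |1 - C| ≤ 1 / 2 ∧
          ∀ v ∈ S, t0 * |μ' v - c' v| ≤ lam v / 2 := by
        have hp : 0 < min (1 / (2 * (|1 - C| + 1)))
            (S.inf' hSne (fun v => lam v / (2 * (|μ' v - c' v| + 1)))) :=
          lt_min (by positivity)
            ((Finset.lt_inf'_iff _).2 fun v hv => div_pos (lpos v hv) (by positivity))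
        exact ⟨_, hp, arith _ _ _ hp.le (abs_nonneg _) (min_le_left _ _),
          fun v hv => arith _ _ _ hp.le (abs_nonneg _)
            (le_trans (min_le_right _ _) (Finset.inf'_le _ hv))⟩
      set κ : V → ℝ := fun v => (1 - t0 * (1 - C)) * lam v + t0 * (μ' v - c' v) with hκ
      have hμ'sum : ∑ v ∈ sWF, μ' v = 1 := by
        rw [← hμ1]
        simp only [hμ']
        exact sum_ite T sWF μ hTsub
      have hc'sum : ∑ v ∈ sWF, c' v = C := by
        rw [hC]
        simp only [hc']
        exact sum_ite S sWF c hSsub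
      have hμ'v : ∑ v ∈ sWF, μ' v • v = k := by
        rw [← hμ2]
        simp only [hμ']
        exact sum_ite_smul T sWF μ hTsub
      have hSv : ∑ v ∈ S, c v • v = (k - x) + C • x := by
        have : ∑ v ∈ S, c v • v = (∑ v ∈ S, c v • (v - x)) + (∑ v ∈ S, c v) • x := by
          rw [Finset.sum_smul, ← Finset.sum_add_distrib]
          apply Finset.sum_congr rfl
          intro v _
          rw [smul_sub]; abel
        rw [this, hc, hC]
      have hc'v : ∑ v ∈ sWF, c' v • v = (k - x) + C • x := by
        rw [← hSv]
        simp only [hc']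
        exact sum_ite_smul S sWF c hSsub
      have hκsum : ∑ v ∈ sWF, κ v = 1 := by
        simp only [hκ]
        rw [Finset.sum_add_distrib, ← Finset.mul_sum, lsum, ← Finset.mul_sum,
          Finset.sum_sub_distrib, hμ'sum, hc'sum]
        ring
      have hκv : ∑ v ∈ sWF, κ v • v = x := by
        have hexp : ∀ v ∈ sWF, κ v • v =
            (1 - t0 * (1 - C)) • (lam v • v) + t0 • (μ' v • v) - t0 • (c' v • v) := by
          intro v _
          simp only [hκ, smul_smul]
          rw [show (1 - t0 * (1 - C)) * lam v + t0 * (μ' v - c' v)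
            = (1 - t0 * (1 - C)) * lam v + t0 * μ' v - t0 * c' v by ring]
          rw [sub_smul, add_smul]
        rw [Finset.sum_congr rfl hexp, Finset.sum_sub_distrib, Finset.sum_add_distrib,
          ← Finset.smul_sum, ← Finset.smul_sum, ← Finset.smul_sum, lx, hμ'v, hc'v]
        module
      have hκ0 : ∀ v ∈ sWF, 0 ≤ κ v := by
        intro v hv
        by_cases hvS : v ∈ S
        · have hμ'0 : μ' v = 0 := by simp [hμ', hST v hvS]
          have ht2' := ht2 v hvS
          have ha1 : t0 * (1 - C) ≤ t0 * |1 - C| :=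
            mul_le_mul_of_nonneg_left (le_abs_self _) ht0pos.le
          have ha2 : t0 * (-|μ' v - c' v|) ≤ t0 * (μ' v - c' v) :=
            mul_le_mul_of_nonneg_left (neg_abs_le _) ht0pos.le
          have hlamnn : 0 ≤ lam v := lnn v hv
          simp only [hκ]
          nlinarith [lpos v hvS, ht1, ht2']
        · by_cases hvT : v ∈ T
          · have hlam0 : lam v = 0 := lsupp v hv hvS
            have hκeq : κ v = t0 * μ v := by
              simp [hκ, hμ', hc', hvT, hvS, hlam0]
            rw [hκeq]
            exact mul_nonneg ht0pos.le (hμ0 v hvT)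
          · have hκeq : κ v = 0 := by
              simp [hκ, hμ', hc', hvT, hvS, lsupp v hv hvS]
            rw [hκeq]
      obtain ⟨v₁, hv₁T, hv₁pos⟩ := Finset.exists_lt_of_sum_lt
        (show ∑ v ∈ T, (0 : ℝ) < ∑ v ∈ T, μ v by rw [hμ1]; simp)
      have hv₁S : v₁ ∉ S := hTS v₁ hv₁T
      have hκv₁ : 0 < κ v₁ := by
        have hκeq : κ v₁ = t0 * μ v₁ := by
          simp [hκ, hμ', hc', hv₁T, hv₁S, lsupp v₁ (hTsub hv₁T) hv₁S]
        rw [hκeq]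
        exact mul_pos ht0pos hv₁pos
      exact hv₁S (Finset.mem_filter.2 ⟨hTsub hv₁T, κ, hκ0, hκsum, hκv, hκv₁⟩)
    -- separate x from K
    have hKconv : Convex ℝ K := by
      rw [hK]; exact (convex_convexHull ℝ _).add E'.convex
    have hKclosed : IsClosed K := by
      rw [hK]
      exact IsClosed.add_left_of_isCompact E'.closed_of_finiteDimensional
        ((T : Set V).toFinite.isCompact_convexHull ℝ)
    obtain ⟨f, u, hfx, hfb⟩ := geometric_hahn_banach_point_closed hKconv hKclosed hxK
    have hfE : ∀ e ∈ E', f e = 0 := by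
      intro e he
      by_contra hfe
      have hmemK : v₀ + ((u - 1 - f v₀) / f e) • e ∈ K := by
        rw [hK]
        exact Set.add_mem_add (subset_convexHull ℝ _ (Finset.mem_coe.2 hv₀T))
          (E'.smul_mem _ he)
      have h1 := hfb _ hmemK
      rw [map_add, map_smul, smul_eq_mul, div_mul_cancel₀ _ hfe] at h1
      linarith
    have hfT : ∀ v ∈ T, u < f v := by
      intro v hv
      have hmemK : v + 0 ∈ K := by
        rw [hK]
        exact Set.add_mem_add (subset_convexHull ℝ _ (Finset.mem_coe.2 hv)) E'.zero_mem
      rw [add_zero] at hmemK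
      exact hfb v hmemK
    -- a perturbed face
    set δF : Finset V := sW.filter (fun v => ¬ φ v = φ x) with hδF
    have hφlt : ∀ v ∈ δF, 0 < φ v - φ x := by
      intro v hv
      have h1 := hxmin v (subset_convexHull ℝ _ (Finset.mem_coe.2 (Finset.filter_subset _ _ hv)))
      have h2 := (Finset.mem_filter.1 hv).2
      exact sub_pos.2 (lt_of_le_of_ne h1 (fun he => h2 he.symm))
    obtain ⟨ε, hεpos, hεlt⟩ : ∃ ε : ℝ, 0 < ε ∧
        ∀ v ∈ δF, ε * (f x - f v) < φ v - φ x := by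
      by_cases h : δF.Nonempty
      · have hp : 0 < min 1 (δF.inf' h (fun v => (φ v - φ x) / (|f x - f v| + 1))) :=
          lt_min one_pos
            ((Finset.lt_inf'_iff _).2 fun v hv => div_pos (hφlt v hv) (by positivity))
        exact ⟨_, hp, fun v hv => arith2 _ _ _ hp (hφlt v hv)
          (le_trans (min_le_right _ _) (Finset.inf'_le _ hv))⟩
      · exact ⟨1, one_pos, fun v hv => absurd ⟨v, hv⟩ h⟩
    set ψ : V →ₗ[ℝ] ℝ := φ + ε • (f : V →ₗ[ℝ] ℝ) with hψ
    have hψapp : ∀ w : V, ψ w = φ w + ε * f w := by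
      intro w
      simp [hψ, smul_eq_mul]
    have hψle : ∀ v ∈ sW, ψ x ≤ ψ v := by
      intro v hv
      rw [hψapp, hψapp]
      by_cases hvF : v ∈ sWF
      · have hφv : φ v = φ x := (Finset.mem_filter.1 hvF).2
        by_cases hvT : v ∈ T
        · have hfxv : f x < f v := lt_trans hfx (hfT v hvT)
          have := mul_le_mul_of_nonneg_left hfxv.le hεpos.le
          linarith
        · have hvE : v - x ∈ E' := by
            by_contra h
            exact hvT (Finset.mem_filter.2 ⟨hvF, h⟩)
          have hfv : f v = f x := by
            have := hfE _ hvE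
            rw [map_sub] at this
            linarith
          rw [hfv, hφv]
      · have hvδ : v ∈ δF := Finset.mem_filter.2
          ⟨hv, fun h => hvF (Finset.mem_filter.2 ⟨hv, h⟩)⟩
        have h1 := hεlt v hvδ
        have h2 : ε * (f x - f v) = ε * f x - ε * f v := by ring
        linarith
    have hxF' : x ∈ {w ∈ Δ | ∀ u ∈ Δ, ψ w ≤ ψ u} :=
      ⟨hxΔ, hull_lb ψ (ψ x) sW hψle⟩
    have hsub := hFmin' ψ hxF'
    have hv₀F : v₀ ∈ F := by
      rw [hF]
      refine ⟨subset_convexHull ℝ _ (Finset.mem_coe.2 (hsWFsub hv₀)), ?_⟩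
      intro w hw
      rw [(Finset.mem_filter.1 hv₀).2]
      exact hxmin w hw
    have h1 : ψ v₀ ≤ ψ x := (hsub hv₀F).2 x hxΔ
    have h2 : f x < f v₀ := lt_trans hfx (hfT v₀ hv₀T)
    have h3 : φ v₀ = φ x := (Finset.mem_filter.1 hv₀).2
    rw [hψapp, hψapp] at h1
    nlinarith [mul_lt_mul_of_pos_left h2 hεpos]
  -- all of F - x lies in E'
  have hFsub : ∀ w ∈ F, w - x ∈ E' := by
    intro w hw
    rw [hF] at hw
    obtain ⟨hwΔ, hwmin⟩ := hw
    have hφw : φ w = φ x := le_antisymm (hwmin x hxΔ) (hxmin w hwΔ)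
    have hwWF := facem w hwΔ hφw
    have hconv : Convex ℝ {u : V | u - x ∈ E'} := by
      intro u1 h1 u2 h2 a b ha hb hab
      have heq : a • u1 + b • u2 - x = a • (u1 - x) + b • (u2 - x) := by
        calc a • u1 + b • u2 - x = a • u1 + b • u2 - (a + b) • x := by rw [hab, one_smul]
          _ = a • (u1 - x) + b • (u2 - x) := by module
      show a • u1 + b • u2 - x ∈ E'
      rw [heq]
      exact E'.add_mem (E'.smul_mem a h1) (E'.smul_mem b h2)
    exact convexHull_min (fun v hv => hkey v (Finset.mem_coe.1 hv)) hconv hwWF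
  -- conclude
  rw [Submodule.disjoint_def]
  intro y hyker hyspan
  have hyr : y ∈ LinearMap.range η := by rw [hexact]; exact hyker
  obtain ⟨c, rfl⟩ := hyr
  by_contra hne
  have hc : c ≠ 0 := fun h => hne (by rw [h, map_zero])
  have hηE : η c ∈ E' := by
    refine Submodule.span_le.2 ?_ hyspan
    rintro _ ⟨w, hw, rfl⟩
    exact hFsub w hw
  have hη1 : η 1 ∈ E' := by
    have heq : η 1 = c⁻¹ • η c := by
      rw [← map_smul]
      congr 1
      rw [smul_eq_mul, inv_mul_cancel₀ hc]
    rw [heq]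
    exact E'.smul_mem _ hηE
  obtain ⟨b, hb⟩ := span_weights S (η 1) hη1
  set B : ℝ := ∑ v ∈ S, b v with hB
  set b' : V → ℝ := fun v => if v ∈ S then b v else 0 with hb'
  obtain ⟨ε, hεpos, hε1, hε2⟩ : ∃ ε : ℝ, 0 < ε ∧ ε * |B| ≤ 1 / 2 ∧
      ∀ v ∈ S, ε * |b' v| ≤ lam v / 2 := by
    have hp : 0 < min (1 / (2 * (|B| + 1)))
        (S.inf' hSne (fun v => lam v / (2 * (|b' v| + 1)))) :=
      lt_min (by positivity)
        ((Finset.lt_inf'_iff _).2 fun v hv => div_pos (lpos v hv) (by positivity))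
    exact ⟨_, hp, arith _ _ _ hp.le (abs_nonneg _) (min_le_left _ _),
      fun v hv => arith _ _ _ hp.le (abs_nonneg _)
        (le_trans (min_le_right _ _) (Finset.inf'_le _ hv))⟩
  set κ : V → ℝ := fun v => (1 + ε * B) * lam v - ε * b' v with hκ
  have hb'sum : ∑ v ∈ sWF, b' v = B := by
    rw [hB]
    simp only [hb']
    exact sum_ite S sWF b hSsub
  have hSv : ∑ v ∈ S, b v • v = η 1 + B • x := by
    have : ∑ v ∈ S, b v • v = (∑ v ∈ S, b v • (v - x)) + (∑ v ∈ S, b v) • x := by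
      rw [Finset.sum_smul, ← Finset.sum_add_distrib]
      apply Finset.sum_congr rfl
      intro v _
      rw [smul_sub]; abel
    rw [this, hb, hB]
  have hb'v : ∑ v ∈ sWF, b' v • v = η 1 + B • x := by
    rw [← hSv]
    simp only [hb']
    exact sum_ite_smul S sWF b hSsub
  have hκsum : ∑ v ∈ sWF, κ v = 1 := by
    simp only [hκ]
    rw [Finset.sum_sub_distrib, ← Finset.mul_sum, lsum, ← Finset.mul_sum, hb'sum]
    ring
  have hκv : ∑ v ∈ sWF, κ v • v = x - ε • η 1 := by
    have hexp : ∀ v ∈ sWF, κ v • v = (1 + ε * B) • (lam v • v) - ε • (b' v • v) := by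
      intro v _
      simp only [hκ, smul_smul]
      rw [sub_smul]
    rw [Finset.sum_congr rfl hexp, Finset.sum_sub_distrib, ← Finset.smul_sum,
      ← Finset.smul_sum, lx, hb'v]
    module
  have hκ0 : ∀ v ∈ sWF, 0 ≤ κ v := by
    intro v hv
    by_cases hvS : v ∈ S
    · have ht1 := hε1
      have ht2 := hε2 v hvS
      have ha1 : ε * (-B) ≤ ε * |B| :=
        mul_le_mul_of_nonneg_left (neg_le_abs _) hεpos.le
      have ha2 : ε * b' v ≤ ε * |b' v| :=
        mul_le_mul_of_nonneg_left (le_abs_self _) hεpos.le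
      have hlamnn : 0 ≤ lam v := lnn v hv
      simp only [hκ]
      nlinarith [lpos v hvS, ht1, ht2]
    · have : κ v = 0 := by
        simp [hκ, hb', hvS, lsupp v hv hvS]
      rw [this]
  have hmem : x - ε • η 1 ∈ Δ := by
    have h := weights_hull sWF κ hκ0 hκsum
    rw [hκv] at h
    exact convexHull_mono (Finset.coe_subset.2 hsWFsub) h
  have hmem' : η (τ - ε) ∈ Δ := by
    have hηε : η ε = ε • η 1 := by rw [← map_smul, smul_eq_mul, mul_one]
    rw [map_sub, hηε]
    exact hmem
  have := hτlb (τ - ε) hmem'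
  linarith
end

section
/- In the setting of the recursion step for a complete Newton datum (exact sequence 0 → ℝ →^η V →^β U → 0, finite 𝒲 ⊂ V with 0 interior to β(convexHull 𝒲), dim U > 0, reduced polytope Δ̄ = convexHull { w ∈ 𝒲 : β(w) ≠ 0 } with minimal height τ̄, minimal face F ∋ η(τ̄), E = span(F − η(τ̄)), σ : V → V/E the projection): the point σ(η(τ̄)) is a vertex of the polytope σ(Δ̄) ⊂ V/E. -/
/-- Part (2) of Lemma 4.16 (l:goodLaurent): in the recursion step for a complete Newton datum,
the image `σ(η τ̄)` of the lowest point of the reduced polytope `Δ̄` under the projection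
`σ : V → V/E` is a vertex (extreme point) of the projected polytope `σ(Δ̄)`. -/
theorem stmt_17 {V U : Type*}
    [NormedAddCommGroup V] [NormedSpace ℝ V] [FiniteDimensional ℝ V]
    [NormedAddCommGroup U] [NormedSpace ℝ U] [FiniteDimensional ℝ U]
    (η : ℝ →ₗ[ℝ] V) (β : V →ₗ[ℝ] U)
    (hη : Function.Injective η) (hβ : Function.Surjective β)
    (hexact : LinearMap.range η = LinearMap.ker β)
    (s : Finset V)
    (hfull : (0 : U) ∈ interior (β '' (convexHull ℝ (s : Set V))))
    (hdim : 0 < Module.finrank ℝ U)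
    (τ : ℝ)
    (hτ : IsLeast {x : ℝ | η x ∈ convexHull ℝ {w ∈ (s : Set V) | β w ≠ 0}} τ)
    (F : Set V)
    (hFface : ∃ φ : V →ₗ[ℝ] ℝ,
      F = {w ∈ convexHull ℝ {w ∈ (s : Set V) | β w ≠ 0} |
        ∀ u ∈ convexHull ℝ {w ∈ (s : Set V) | β w ≠ 0}, φ w ≤ φ u})
    (hFmem : η τ ∈ F)
    (hFmin : ∀ F' : Set V,
      (∃ φ : V →ₗ[ℝ] ℝ,
        F' = {w ∈ convexHull ℝ {w ∈ (s : Set V) | β w ≠ 0} |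
          ∀ u ∈ convexHull ℝ {w ∈ (s : Set V) | β w ≠ 0}, φ w ≤ φ u}) →
      η τ ∈ F' → F ⊆ F')
    (E : Submodule ℝ V)
    (hE : E = Submodule.span ℝ ((fun x => x - η τ) '' F)) :
    E.mkQ (η τ) ∈
      Set.extremePoints ℝ (E.mkQ '' (convexHull ℝ {w ∈ (s : Set V) | β w ≠ 0})) := by

  obtain ⟨φ, hF⟩ := hFface
  have hτΔ : η τ ∈ convexHull ℝ {w ∈ (s : Set V) | β w ≠ 0} := hτ.1
  have hFmem' := hFmem
  rw [hF] at hFmem'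
  have hm : ∀ w ∈ F, φ w = φ (η τ) := by
    intro w hw
    rw [hF] at hw
    exact le_antisymm (hw.2 _ hτΔ) (hFmem'.2 _ hw.1)
  have hEker : E ≤ LinearMap.ker φ := by
    rw [hE, Submodule.span_le]
    rintro _ ⟨w, hw, rfl⟩
    simp [LinearMap.mem_ker, hm w hw]
  have hinF : ∀ a ∈ F, E.mkQ a = E.mkQ (η τ) := by
    intro a ha
    rw [Submodule.mkQ_apply, Submodule.mkQ_apply, Submodule.Quotient.eq]
    exact hE ▸ Submodule.subset_span ⟨a, ha, rfl⟩
  constructor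
  · exact ⟨η τ, hτΔ, rfl⟩
  rintro x₁ ⟨a, ha, rfl⟩ x₂ ⟨b, hb, rfl⟩ ⟨t₁, t₂, ht₁, ht₂, hsum, heq⟩
  have hcomb : t₁ • a + t₂ • b - η τ ∈ E := by
    have h0 : E.mkQ (t₁ • a + t₂ • b - η τ) = 0 := by
      rw [map_sub, map_add, map_smul, map_smul, heq, sub_self]
    rwa [← LinearMap.mem_ker, Submodule.ker_mkQ] at h0
  have hφ : t₁ * φ a + t₂ * φ b = φ (η τ) := by
    have h0 : φ (t₁ • a + t₂ • b - η τ) = 0 := hEker hcomb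
    simp only [map_sub, map_add, map_smul, smul_eq_mul, sub_eq_zero] at h0
    exact h0
  have hamin : φ (η τ) ≤ φ a := hFmem'.2 a ha
  have hbmin : φ (η τ) ≤ φ b := hFmem'.2 b hb
  have h3 : t₁ * φ (η τ) + t₂ * φ (η τ) = φ (η τ) := by rw [← add_mul, hsum, one_mul]
  have haeq : φ a = φ (η τ) := by
    by_contra hne
    have h1 : t₁ * φ (η τ) < t₁ * φ a :=
      mul_lt_mul_of_pos_left (lt_of_le_of_ne hamin (Ne.symm hne)) ht₁
    have h2 : t₂ * φ (η τ) ≤ t₂ * φ b := mul_le_mul_of_nonneg_left hbmin ht₂.le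
    linarith
  have hbeq : φ b = φ (η τ) := by
    by_contra hne
    have h1 : t₂ * φ (η τ) < t₂ * φ b :=
      mul_lt_mul_of_pos_left (lt_of_le_of_ne hbmin (Ne.symm hne)) ht₂
    have h2 : t₁ * φ (η τ) ≤ t₁ * φ a := mul_le_mul_of_nonneg_left hamin ht₁.le
    linarith
  have haF : a ∈ F := by
    rw [hF]; exact ⟨ha, fun u hu => haeq ▸ hFmem'.2 u hu⟩
  have hbF : b ∈ F := by
    rw [hF]; exact ⟨hb, fun u hu => hbeq ▸ hFmem'.2 u hu⟩
  exact hinF a haF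
end
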